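/- arXiv:math/0501233 — 4 statements merged into one kernel-verified Lean document; each statement's English description precedes it below -/
import Mathlib

section
/- Two Kronecker products of Fourier matrices of prime-power sizes (FFKPs) of the same size N are permutation equivalent if and only if they have identical factor multisets, i.e. the factors of one are a permutation of the factors of the other. -/
open Matrix

/-- The unitary Fourier matrix of size `n` (0-based indexing):
`[F_n]_{i,j} = (1/√n)·exp(2πi·i·j/n)`. -/
noncomputable def Fourier (n : ℕ) : Matrix (Fin n) (Fin n) ℂ :=
  Matrix.of fun i j =>
    ((1 / Real.sqrt n : ℝ) : ℂ) *
      Complex.exp (2 * Real.pi * Complex.I * ((i : ℕ) : ℂ) * ((j : ℕ) : ℂ) / n)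

/-- Kronecker product of square complex matrices, realized on `Fin (m * n)`. -/
noncomputable def kron {m n : ℕ} (A : Matrix (Fin m) (Fin m) ℂ)
    (B : Matrix (Fin n) (Fin n) ℂ) : Matrix (Fin (m * n)) (Fin (m * n)) ℂ :=
  Matrix.of fun i j =>
    A (finProdFinEquiv.symm i).1 (finProdFinEquiv.symm j).1 *
      B (finProdFinEquiv.symm i).2 (finProdFinEquiv.symm j).2

/-- Kronecker product of row vectors. -/
noncomputable def kronVec {m n : ℕ} (v : Fin m → ℂ) (w : Fin n → ℂ) : Fin (m * n) → ℂ :=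
  fun i => v (finProdFinEquiv.symm i).1 * w (finProdFinEquiv.symm i).2

/-- Kronecker product of the Fourier matrices of the sizes in the list `L`. -/
noncomputable def kronFourier : (L : List ℕ) → Matrix (Fin L.prod) (Fin L.prod) ℂ
  | [] => 1
  | n :: t => kron (Fourier n) (kronFourier t)

open Classical in
/-- `v` is a row of length `N` whose entries are `(1/√N)` times the `n`-th roots of
unity, each occurring `N / n` times. -/
def RowVals (N n : ℕ) (v : Fin N → ℂ) : Prop :=
  ∀ t : Fin n,
    (Finset.univ.filter fun j =>
      v j = ((1 / Real.sqrt N : ℝ) : ℂ) *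
        Complex.exp (2 * Real.pi * Complex.I * ((t : ℕ) : ℂ) / n)).card = N / n

open Classical in
/-- Number of rows of the square matrix `M` that are of "type `n`", i.e. consist of
`(1/√N)` times the `n`-th roots of unity, each occurring equally often. -/
noncomputable def countRows (N n : ℕ) (M : Matrix (Fin N) (Fin N) ℂ) : ℕ :=
  (Finset.univ.filter fun i : Fin N => RowVals N n (M i)).card

/-- `P` is a permutation matrix. -/
def IsPermMatrix {α : Type*} [DecidableEq α] (P : Matrix α α ℂ) : Prop :=
  ∃ σ : Equiv.Perm α, ∀ i j, P i j = if σ j = i then (1 : ℂ) else 0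

/-- `D` is a unitary diagonal matrix. -/
def IsUnitaryDiag {α : Type*} [DecidableEq α] (D : Matrix α α ℂ) : Prop :=
  ∃ d : α → ℂ, (∀ i, ‖d i‖ = 1) ∧ D = Matrix.diagonal d

noncomputable section FFKPAux

open Finset

namespace Stmt15

/-- `exp (2 π i x)` for real `x`. -/
def eC (x : ℝ) : ℂ := Complex.exp (2 * Real.pi * Complex.I * x)

/-- The scalar `1/√N` as a complex number. -/
def cc (N : ℕ) : ℂ := ((1 / Real.sqrt N : ℝ) : ℂ)

lemma cc_ne_zero {N : ℕ} (hN : 0 < N) : cc N ≠ 0 := by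
  simp only [cc, ne_eq, Complex.ofReal_eq_zero, div_eq_zero_iff, one_ne_zero, false_or]
  exact Real.sqrt_ne_zero'.mpr (by exact_mod_cast hN)

lemma cc_mul (M N : ℕ) : cc M * cc N = cc (M * N) := by
  simp only [cc, ← Complex.ofReal_mul]
  congr 1
  rw [div_mul_div_comm, one_mul, ← Real.sqrt_mul (Nat.cast_nonneg M)]
  push_cast
  ring_nf

lemma eC_add (x y : ℝ) : eC (x + y) = eC x * eC y := by
  simp only [eC, ← Complex.exp_add]
  congr 1
  push_cast
  ring

lemma eC_int (k : ℤ) : eC k = 1 := by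
  rw [eC, ← Complex.exp_int_mul_two_pi_mul_I k]
  congr 1
  push_cast
  ring

lemma eC_eq_iff {a b : ℝ} : eC a = eC b ↔ ∃ k : ℤ, a = b + k := by
  rw [eC, eC, Complex.exp_eq_exp_iff_exists_int]
  have h2pi : (2 * (Real.pi : ℂ) * Complex.I) ≠ 0 := by
    simp [Real.pi_ne_zero, Complex.I_ne_zero]
  constructor
  · rintro ⟨k, hk⟩
    refine ⟨k, ?_⟩
    have h1 : (2 * (Real.pi : ℂ) * Complex.I) * a = (2 * (Real.pi : ℂ) * Complex.I) * (b + k) := by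
      rw [show (2 * (Real.pi : ℂ) * Complex.I) * a = 2 * (Real.pi : ℂ) * Complex.I * a by ring, hk]
      ring
    have h2 := mul_left_cancel₀ h2pi h1
    have h3 : ((a : ℂ)) = ((b + (k : ℝ) : ℝ) : ℂ) := by push_cast; exact_mod_cast h2
    exact_mod_cast h3
  · rintro ⟨k, hk⟩
    exact ⟨k, by rw [hk]; push_cast; ring⟩

lemma eC_inj {a b : ℝ} (ha : 0 ≤ a) (ha1 : a < 1) (hb : 0 ≤ b) (hb1 : b < 1)
    (h : eC a = eC b) : a = b := by
  obtain ⟨k, hk⟩ := eC_eq_iff.mp h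
  have hk' : (k : ℝ) = a - b := by linarith
  have h1 : (-1 : ℝ) < (k : ℝ) := by rw [hk']; linarith
  have h2 : ((k : ℝ)) < 1 := by rw [hk']; linarith
  have h1' : (-1 : ℤ) < k := by exact_mod_cast h1
  have h2' : k < 1 := by exact_mod_cast h2
  have : k = 0 := by omega
  rw [this] at hk
  simpa using hk

lemma eC_nat_mod (a d : ℕ) (hd : 0 < d) :
    eC (((a % d : ℕ) : ℝ) / (d : ℝ)) = eC ((a : ℝ) / d) := by
  refine eC_eq_iff.mpr ⟨-(a / d : ℕ), ?_⟩
  have hd0 : (d : ℝ) ≠ 0 := Nat.cast_ne_zero.mpr hd.ne'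
  have hcast : (d : ℝ) * ((a / d : ℕ) : ℝ) + ((a % d : ℕ) : ℝ) = (a : ℝ) := by
    exact_mod_cast congrArg (Nat.cast : ℕ → ℝ) (Nat.div_add_mod a d)
  have hk : ((-(a / d : ℕ) : ℤ) : ℝ) = -((a / d : ℕ) : ℝ) := by
    rw [Int.cast_neg, Int.cast_natCast]
  rw [hk]
  field_simp
  linarith

lemma fourier_apply (n : ℕ) (i j : Fin n) :
    Fourier n i j = cc n * eC ((i.val * j.val : ℕ) / (n : ℝ)) := by
  simp only [Fourier, Matrix.of_apply, cc, eC]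
  congr 2
  push_cast
  ring

open Classical in
lemma rowVals_iff (N n : ℕ) (v : Fin N → ℂ) :
    RowVals N n v ↔ ∀ t : Fin n,
      (Finset.univ.filter fun j => v j = cc N * eC ((t : ℕ) / (n : ℝ))).card = N / n := by
  unfold RowVals
  refine forall_congr' fun t => ?_
  have hval : ((1 / Real.sqrt N : ℝ) : ℂ) *
      Complex.exp (2 * Real.pi * Complex.I * ((t : ℕ) : ℂ) / n) = cc N * eC ((t : ℕ) / (n : ℝ)) := by
    rw [cc, eC]
    congr 2
    push_cast
    ring
  rw [Finset.filter_congr (fun j _ => by rw [hval])]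

/-! ### Uniform maps -/

open Classical in
/-- `f` is a uniform map: every fiber has cardinality `u`. -/
def Unif {α β : Type*} [Fintype α] (f : α → β) (u : ℕ) : Prop :=
  ∀ y : β, (Finset.univ.filter fun x => f x = y).card = u

lemma card_filter_congr {α : Type*} [Fintype α] {p q : α → Prop} [DecidablePred p]
    [DecidablePred q] (h : ∀ x, p x ↔ q x) :
    (Finset.univ.filter p).card = (Finset.univ.filter q).card := by
  congr 1
  ext x
  simp only [Finset.mem_filter, h x]

open Classical in
lemma card_filter_equiv {α β : Type*} [Fintype α] [Fintype β] (e : β ≃ α) (p : α → Prop) :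
    (Finset.univ.filter fun b => p (e b)).card = (Finset.univ.filter p).card := by
  exact Finset.card_equiv e (fun b => by simp)

lemma Unif.comp {α β γ : Type*} [Fintype α] [Fintype β] {f : α → β} {g : β → γ} {u w : ℕ}
    (hf : Unif f u) (hg : Unif g w) : Unif (g ∘ f) (u * w) := by
  classical
  intro z
  have h1 : ∀ y ∈ Finset.univ.filter (fun y => g y = z),
      ((Finset.univ.filter fun x => (g ∘ f) x = z).filter fun x => f x = y).card = u := by
    intro y hy
    rw [Finset.mem_filter] at hy
    have hfil : ((Finset.univ.filter fun x => (g ∘ f) x = z).filter fun x => f x = y)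
        = Finset.univ.filter fun x => f x = y := by
      ext x
      simp only [Finset.mem_filter, Finset.mem_univ, true_and, Function.comp_apply]
      constructor
      · rintro ⟨-, h⟩; exact h
      · intro h; exact ⟨by rw [h]; exact hy.2, h⟩
    rw [hfil]
    exact hf y
  rw [Finset.card_eq_sum_card_fiberwise
      (f := f) (t := Finset.univ.filter fun y => g y = z)
      (fun x hx => by
        simp only [Finset.mem_coe, Finset.mem_filter, Finset.mem_univ, true_and] at hx ⊢
        exact hx)]
  rw [Finset.sum_congr rfl h1, Finset.sum_const, hg z, smul_eq_mul, mul_comm]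

lemma Unif.card' {α β : Type*} [Fintype α] {f : α → β} {u : ℕ} (hf : Unif f u) (y : β)
    {inst : DecidablePred fun x => f x = y} :
    (@Finset.filter _ _ inst Finset.univ).card = u := by
  refine Eq.trans ?_ (hf y)
  congr 1
  ext x
  simp [Finset.mem_filter]

lemma unif_equiv {α β : Type*} [Fintype α] (e : α ≃ β) : Unif e 1 := by
  classical
  intro y
  have : (Finset.univ.filter fun x => e x = y) = {e.symm y} := by
    ext x
    simp [Equiv.eq_symm_apply, eq_comm]
  rw [this]
  simp

lemma Unif.comp_equiv {α β γ : Type*} [Fintype α] [Fintype β] {f : β → γ} {u : ℕ}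
    (hf : Unif f u) (e : α ≃ β) : Unif (f ∘ e) u := by
  have h1 := (unif_equiv e).comp hf
  simpa using h1

lemma Unif.of_comp_equiv {α β γ : Type*} [Fintype α] [Fintype β] {f : β → γ} {u : ℕ}
    (e : α ≃ β) (hf : Unif (f ∘ e) u) : Unif f u := by
  have h1 := hf.comp_equiv e.symm
  have : (f ∘ e) ∘ e.symm = f := by
    funext x
    simp
  rwa [this] at h1

lemma Unif.prodMap {α β γ δ : Type*} [Fintype α] [Fintype γ] {f : α → β} {g : γ → δ}
    {u w : ℕ} (hf : Unif f u) (hg : Unif g w) : Unif (Prod.map f g) (u * w) := by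
  classical
  intro y
  rw [show u * w = ((Finset.univ.filter fun a => f a = y.1) ×ˢ
      (Finset.univ.filter fun c => g c = y.2)).card from by
    rw [Finset.card_product, hf.card' y.1, hg.card' y.2]]
  congr 1
  ext x
  simp [Finset.mem_filter, Finset.mem_product, Prod.ext_iff]

lemma unif_addHom {G H : Type*} [AddCommGroup G] [Fintype G] [AddCommGroup H] [Fintype H]
    (f : G →+ H) (hs : Function.Surjective f) :
    Unif f (Fintype.card G / Fintype.card H) := by
  classical
  have key : ∀ y, (Finset.univ.filter fun x => f x = y).card
      = (Finset.univ.filter fun x => f x = 0).card := by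
    intro y
    obtain ⟨x₀, hx₀⟩ := hs y
    refine Finset.card_bij' (fun x _ => x - x₀) (fun x _ => x + x₀) ?_ ?_ ?_ ?_ <;>
      intros a ha <;>
      simp only [Finset.mem_filter, Finset.mem_univ, true_and, map_sub, map_add] at ha ⊢ <;>
      simp [ha, hx₀]
  have hsum : ∑ y : H, (Finset.univ.filter fun x => f x = y).card = Fintype.card G := by
    rw [← Finset.card_univ, Finset.card_eq_sum_card_fiberwise (f := f) (t := Finset.univ)
      (fun x _ => Finset.mem_univ _)]
  have hcard : Fintype.card H * (Finset.univ.filter fun x => f x = 0).card = Fintype.card G := by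
    rw [← hsum]
    rw [Finset.sum_congr rfl fun y _ => key y, Finset.sum_const, Finset.card_univ, smul_eq_mul]
  intro y
  rw [key y, ← hcard, Nat.mul_div_cancel_left _ Fintype.card_pos]

lemma unif_natCast {n N : ℕ} (hn : 0 < n) (h : n ∣ N) :
    Unif (fun j : Fin N => ((j : ℕ) : ZMod n)) (N / n) := by
  classical
  haveI : NeZero n := ⟨hn.ne'⟩
  obtain ⟨k, hk⟩ := h
  let eZ : Fin n ≃ ZMod n :=
    { toFun := fun b => ((b : ℕ) : ZMod n)
      invFun := fun y => ⟨y.val, ZMod.val_lt y⟩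
      left_inv := fun b => by
        ext
        simp [ZMod.val_natCast, Nat.mod_eq_of_lt b.isLt]
      right_inv := fun y => ZMod.natCast_rightInverse y }
  let e' : Fin k × Fin n ≃ Fin N := finProdFinEquiv.trans (finCongr (by rw [hk, mul_comm]))
  have hsnd : Unif (fun x : Fin k × Fin n => x.2) k := by
    intro y
    refine Eq.trans ?_ (by simp : ((Finset.univ : Finset (Fin k)).card = k))
    refine Finset.card_nbij' (fun x => x.1) (fun a => (a, y)) ?_ ?_ ?_ ?_ <;>
      simp +contextual [Finset.mem_filter, Prod.ext_iff, eq_comm, Set.LeftInvOn, Set.RightInvOn, Set.EqOn]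
  have hcomp : Unif ((fun b : Fin n => ((b : ℕ) : ZMod n)) ∘ fun x : Fin k × Fin n => x.2)
      (k * 1) := hsnd.comp (unif_equiv eZ)
  have heq : ((fun j : Fin N => ((j : ℕ) : ZMod n)) ∘ e')
      = ((fun b : Fin n => ((b : ℕ) : ZMod n)) ∘ fun x : Fin k × Fin n => x.2) := by
    funext x
    simp only [Function.comp_apply]
    have hval : ((e' x : Fin N) : ℕ) = (x.2 : ℕ) + n * (x.1 : ℕ) := rfl
    rw [hval]
    push_cast
    simp
  have hres := Unif.of_comp_equiv e' (by rw [heq]; exact hcomp)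
  have hdiv : N / n = k * 1 := by
    rw [hk]
    simp [Nat.mul_div_cancel_left _ hn]
  rwa [hdiv]

/-! ### Row structure of Fourier and Kronecker matrices -/

/-- The order of row `i` of the Fourier matrix of size `n`. -/
def rowOrd (n : ℕ) (i : Fin n) : ℕ := n / Nat.gcd i.val n

/-- The order of row `i` of `kronFourier L`. -/
def rowOrder : (L : List ℕ) → Fin L.prod → ℕ
  | [] => fun _ => 1
  | n :: t => fun i =>
      Nat.lcm (rowOrd n (finProdFinEquiv.symm i).1) (rowOrder t (finProdFinEquiv.symm i).2)

/-- `v` consists of `(1/√N)` times `n`-th roots of unity, distributed uniformly via `φ`. -/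
def UnifTo (N n : ℕ) (v : Fin N → ℂ) : Prop :=
  ∃ φ : Fin N → ZMod n, Unif φ (N / n) ∧ ∀ j, v j = cc N * eC ((φ j).val / (n : ℝ))

lemma rowOrd_dvd (n : ℕ) (i : Fin n) : rowOrd n i ∣ n := by
  exact Nat.div_dvd_of_dvd (Nat.gcd_dvd_right _ _)

lemma rowOrd_pos {n : ℕ} (hn : 0 < n) (i : Fin n) : 0 < rowOrd n i := by
  exact Nat.div_pos (Nat.le_of_dvd hn (Nat.gcd_dvd_right _ _)) (Nat.gcd_pos_of_pos_right _ hn)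

lemma fourier_row_unifTo {n : ℕ} (hn : 0 < n) (i : Fin n) :
    UnifTo n (rowOrd n i) (Fourier n i) := by
  show UnifTo n (n / Nat.gcd i.val n) (Fourier n i)
  have hgpos : 0 < Nat.gcd i.val n := Nat.gcd_pos_of_pos_right _ hn
  have hgd : Nat.gcd i.val n ∣ n := Nat.gcd_dvd_right _ _
  have hgi : Nat.gcd i.val n ∣ i.val := Nat.gcd_dvd_left _ _
  set g := Nat.gcd i.val n with hg
  set d := n / g with hd
  have hdpos : 0 < d := rowOrd_pos hn i
  haveI : NeZero d := ⟨hdpos.ne'⟩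
  have hdn : d ∣ n := rowOrd_dvd n i
  have hcop : Nat.Coprime (i.val / g) d := Nat.coprime_div_gcd_div_gcd hgpos
  refine ⟨fun j => ((i.val / g : ℕ) : ZMod d) * ((j : ℕ) : ZMod d), ?_, ?_⟩
  · have hunit : IsUnit ((i.val / g : ℕ) : ZMod d) := (ZMod.unitOfCoprime _ hcop).isUnit
    obtain ⟨u, hu⟩ := hunit
    have h1 := (unif_natCast hdpos hdn).comp (unif_equiv (Units.mulLeft u))
    have h2 : ((Units.mulLeft u : Equiv.Perm (ZMod d)) ∘ fun j : Fin n => ((j : ℕ) : ZMod d))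
        = fun j : Fin n => ((i.val / g : ℕ) : ZMod d) * ((j : ℕ) : ZMod d) := by
      funext j
      simp [hu]
    rw [← h2]
    simpa using h1
  · intro j
    rw [fourier_apply]
    congr 1
    have hv : ((((i.val / g : ℕ) : ZMod d) * ((j : ℕ) : ZMod d)).val)
        = ((i.val / g) * (j : ℕ)) % d := by
      rw [← Nat.cast_mul, ZMod.val_natCast]
    rw [hv, eC_nat_mod _ _ hdpos]
    congr 1
    have hij : i.val * j.val = g * ((i.val / g) * (j : ℕ)) := by
      rw [← mul_assoc, Nat.mul_div_cancel' hgi]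
    have hnn : n = g * d := (Nat.mul_div_cancel' hgd).symm
    have hg0 : (g : ℝ) ≠ 0 := Nat.cast_ne_zero.mpr hgpos.ne'
    rw [hij]
    rw [show ((g * ((i.val / g) * (j : ℕ)) : ℕ) : ℝ)
      = (g : ℝ) * (((i.val / g) * (j : ℕ) : ℕ) : ℝ) from by push_cast; ring]
    rw [show (n : ℝ) = (g : ℝ) * ((d : ℕ) : ℝ) from by exact_mod_cast congrArg (Nat.cast : ℕ → ℝ) hnn]
    rw [mul_div_mul_left _ _ hg0]

lemma kronVec_unifTo {M N m n : ℕ} {v : Fin M → ℂ} {w : Fin N → ℂ}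
    (hm : 0 < m) (hn : 0 < n) (hmM : m ∣ M) (hnN : n ∣ N)
    (hv : UnifTo M m v) (hw : UnifTo N n w) :
    UnifTo (M * N) (Nat.lcm m n) (kronVec v w) := by
  obtain ⟨φ, hφu, hφv⟩ := hv
  obtain ⟨ψ, hψu, hψv⟩ := hw
  set l := Nat.lcm m n with hl
  have hml : m ∣ l := Nat.dvd_lcm_left m n
  have hnl : n ∣ l := Nat.dvd_lcm_right m n
  have hlpos : 0 < l := Nat.pos_of_ne_zero (Nat.lcm_ne_zero hm.ne' hn.ne')
  haveI : NeZero m := ⟨hm.ne'⟩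
  haveI : NeZero n := ⟨hn.ne'⟩
  haveI : NeZero l := ⟨hlpos.ne'⟩
  have hm0 : (m : ℝ) ≠ 0 := Nat.cast_ne_zero.mpr hm.ne'
  have hn0 : (n : ℝ) ≠ 0 := Nat.cast_ne_zero.mpr hn.ne'
  have hl0 : (l : ℝ) ≠ 0 := Nat.cast_ne_zero.mpr hlpos.ne'
  -- the addition homomorphism `ZMod m × ZMod n →+ ZMod l`
  have hfm : ((Int.castAddHom (ZMod l)).comp (AddMonoidHom.mulLeft ((l / m : ℕ) : ℤ))) (m : ℤ) = 0 := by
    simp only [AddMonoidHom.comp_apply, AddMonoidHom.coe_mulLeft, Int.coe_castAddHom]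
    have : ((l / m : ℕ) : ℤ) * (m : ℤ) = (l : ℤ) := by exact_mod_cast Nat.div_mul_cancel hml
    rw [this]
    exact_mod_cast ZMod.natCast_self l
  have hfn : ((Int.castAddHom (ZMod l)).comp (AddMonoidHom.mulLeft ((l / n : ℕ) : ℤ))) (n : ℤ) = 0 := by
    simp only [AddMonoidHom.comp_apply, AddMonoidHom.coe_mulLeft, Int.coe_castAddHom]
    have : ((l / n : ℕ) : ℤ) * (n : ℤ) = (l : ℤ) := by exact_mod_cast Nat.div_mul_cancel hnl
    rw [this]
    exact_mod_cast ZMod.natCast_self l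
  set h1 : ZMod m →+ ZMod l := ZMod.lift m ⟨_, hfm⟩ with hh1
  set h2 : ZMod n →+ ZMod l := ZMod.lift n ⟨_, hfn⟩ with hh2
  set h : ZMod m × ZMod n →+ ZMod l := h1.coprod h2 with hh
  have h1app : ∀ s : ZMod m, h1 s = (((l / m) * s.val : ℕ) : ZMod l) := by
    intro s
    conv_lhs => rw [show s = (((s.val : ℕ) : ℤ) : ZMod m) by push_cast; exact (ZMod.natCast_rightInverse s).symm]
    rw [hh1, ZMod.lift_coe]
    simp only [AddMonoidHom.comp_apply, AddMonoidHom.coe_mulLeft, Int.coe_castAddHom]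
    exact_mod_cast rfl
  have h2app : ∀ u : ZMod n, h2 u = (((l / n) * u.val : ℕ) : ZMod l) := by
    intro u
    conv_lhs => rw [show u = (((u.val : ℕ) : ℤ) : ZMod n) by push_cast; exact (ZMod.natCast_rightInverse u).symm]
    rw [hh2, ZMod.lift_coe]
    simp only [AddMonoidHom.comp_apply, AddMonoidHom.coe_mulLeft, Int.coe_castAddHom]
    exact_mod_cast rfl
  have happ : ∀ x : ZMod m × ZMod n,
      h x = (((l / m) * x.1.val + (l / n) * x.2.val : ℕ) : ZMod l) := by
    intro x
    rw [hh, AddMonoidHom.coprod_apply, h1app, h2app]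
    push_cast
    ring
  -- coprimality and surjectivity
  have hgcd : Nat.gcd m n ∣ m := Nat.gcd_dvd_left m n
  have hgcd' : Nat.gcd m n ∣ n := Nat.gcd_dvd_right m n
  have hgpos : 0 < Nat.gcd m n := Nat.gcd_pos_of_pos_right _ hn
  have hlm : l / m = n / Nat.gcd m n := by
    rw [hl, Nat.lcm, Nat.mul_div_assoc m hgcd', Nat.mul_div_cancel_left _ hm]
  have hln : l / n = m / Nat.gcd m n := by
    rw [hl, Nat.lcm, mul_comm m n, Nat.mul_div_assoc n hgcd, Nat.mul_div_cancel_left _ hn]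
  have hcop : Nat.Coprime (l / m) (l / n) := by
    rw [hlm, hln]
    exact (Nat.coprime_div_gcd_div_gcd hgpos).symm
  have hsurj : Function.Surjective h := by
    intro z
    have hbez : ((1 : ℕ) : ℤ) = (l / m : ℕ) * Nat.gcdA (l / m) (l / n)
        + (l / n : ℕ) * Nat.gcdB (l / m) (l / n) := by
      rw [← Nat.Coprime.gcd_eq_one hcop]
      exact Nat.gcd_eq_gcd_ab _ _
    refine ⟨(z.val : ℤ) • (((Nat.gcdA (l / m) (l / n) : ℤ) : ZMod m),
      ((Nat.gcdB (l / m) (l / n) : ℤ) : ZMod n)), ?_⟩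
    rw [map_zsmul]
    have hone : h (((Nat.gcdA (l / m) (l / n) : ℤ) : ZMod m),
        ((Nat.gcdB (l / m) (l / n) : ℤ) : ZMod n)) = 1 := by
      rw [hh, AddMonoidHom.coprod_apply, hh1, hh2, ZMod.lift_coe, ZMod.lift_coe]
      simp only [AddMonoidHom.comp_apply, AddMonoidHom.coe_mulLeft, Int.coe_castAddHom]
      rw [← Int.cast_add, ← hbez]
      norm_num
    rw [hone]
    rw [zsmul_eq_mul, mul_one]
    push_cast
    exact ZMod.natCast_rightInverse z
  -- uniformity
  have hcards : Fintype.card (ZMod m × ZMod n) = m * n := by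
    rw [Fintype.card_prod, ZMod.card, ZMod.card]
  have hh_unif : Unif (⇑h) ((m * n) / l) := by
    have := unif_addHom h hsurj
    rwa [hcards, ZMod.card] at this
  have hcomp := ((hφu.prodMap hψu).comp hh_unif).comp_equiv
    (finProdFinEquiv (m := M) (n := N)).symm
  have harith : M / m * (N / n) * (m * n / l) = M * N / l := by
    obtain ⟨a, ha⟩ := hmM
    obtain ⟨b, hb⟩ := hnN
    obtain ⟨c, hc⟩ := Nat.lcm_dvd_mul m n
    subst ha hb
    rw [Nat.mul_div_cancel_left a hm, Nat.mul_div_cancel_left b hn, hc,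
      Nat.mul_div_cancel_left c hlpos,
      show m * a * (n * b) = l * (c * (a * b)) by rw [show m * a * (n * b) = m * n * (a * b) from by ring, hc]; ring,
      Nat.mul_div_cancel_left _ hlpos]
    ring
  refine ⟨(⇑h ∘ Prod.map φ ψ) ∘ ⇑(finProdFinEquiv (m := M) (n := N)).symm, ?_, ?_⟩
  · rwa [harith] at hcomp
  · intro j
    set x := (finProdFinEquiv (m := M) (n := N)).symm j with hx
    have hval : kronVec v w j = cc (M * N) *
        (eC ((φ x.1).val / (m : ℝ)) * eC ((ψ x.2).val / (n : ℝ))) := by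
      rw [kronVec, hφv, hψv, ← hx]
      rw [show cc M * eC ((φ x.1).val / (m : ℝ)) * (cc N * eC ((ψ x.2).val / (n : ℝ)))
        = cc M * cc N * (eC ((φ x.1).val / (m : ℝ)) * eC ((ψ x.2).val / (n : ℝ))) from by ring, cc_mul]
    rw [hval, ← eC_add]
    congr 1
    have hzv : ((h (Prod.map φ ψ x)).val : ℕ)
        = ((l / m) * (φ x.1).val + (l / n) * (ψ x.2).val) % l := by
      rw [happ, ZMod.val_natCast]
      rfl
    show eC ((φ x.1).val / (m : ℝ) + (ψ x.2).val / (n : ℝ))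
      = eC (((h (Prod.map φ ψ x)).val : ℕ) / (l : ℝ))
    rw [hzv, eC_nat_mod _ _ hlpos]
    congr 1
    have e1 : ((l / m : ℕ) : ℝ) = (l : ℝ) / (m : ℝ) := Nat.cast_div hml hm0
    have e2 : ((l / n : ℕ) : ℝ) = (l : ℝ) / (n : ℝ) := Nat.cast_div hnl hn0
    push_cast
    rw [e1, e2]
    field_simp

lemma rowOrder_dvd (L : List ℕ) (i : Fin L.prod) : rowOrder L i ∣ L.prod := by
  induction L with
  | nil => simp [rowOrder]
  | cons n t ih =>
    show Nat.lcm _ _ ∣ (n :: t).prod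
    rw [List.prod_cons]
    exact Nat.lcm_dvd (dvd_mul_of_dvd_left (rowOrd_dvd n _) _)
      (dvd_mul_of_dvd_right (ih _) _)

lemma rowOrder_pos {L : List ℕ} (hL : ∀ x ∈ L, 0 < x) (i : Fin L.prod) :
    0 < rowOrder L i := by
  induction L with
  | nil => simp [rowOrder]
  | cons n t ih =>
    have h1 : 0 < rowOrd n (finProdFinEquiv.symm i).1 :=
      rowOrd_pos (hL n (List.mem_cons_self)) _
    have h2 : 0 < rowOrder t (finProdFinEquiv.symm i).2 :=
      ih (fun x hx => hL x (List.mem_cons_of_mem n hx)) _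
    show 0 < Nat.lcm _ _
    exact Nat.pos_of_ne_zero (Nat.lcm_ne_zero h1.ne' h2.ne')

lemma kronFourier_row_unifTo {L : List ℕ} (hL : ∀ x ∈ L, 0 < x) (i : Fin L.prod) :
    UnifTo L.prod (rowOrder L i) (kronFourier L i) := by
  induction L with
  | nil =>
    show UnifTo (List.prod []) 1 (kronFourier [] i)
    refine ⟨fun _ => 0, ?_, ?_⟩
    · intro y
      have hy : y = 0 := Subsingleton.elim y 0
      subst hy
      refine Eq.trans ?_ (?_ : (Finset.univ : Finset (Fin (List.prod ([] : List ℕ)))).card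
        = List.prod [] / 1)
      · congr 1
        ext x
        simp
      · rw [Finset.card_univ, Fintype.card_fin]; simp
    · intro j
      have hp1 : List.prod ([] : List ℕ) = 1 := List.prod_nil
      have hi : (i : ℕ) = 0 := by
        have h := i.isLt
        omega
      have hj : (j : ℕ) = 0 := by
        have h := j.isLt
        omega
      have hij : i = j := Fin.ext (by rw [hi, hj])
      subst hij
      have h1 : kronFourier [] i i = 1 := Matrix.one_apply_eq i
      rw [h1]
      have : ((0 : ZMod 1).val : ℝ) = 0 := by norm_num [ZMod.val]
      rw [this]
      norm_num [cc, eC, List.prod_nil]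
  | cons n t ih =>
    have hrow : kronFourier (n :: t) i
        = kronVec (Fourier n (finProdFinEquiv.symm i).1)
            (kronFourier t (finProdFinEquiv.symm i).2) := rfl
    have hn : 0 < n := hL n (List.mem_cons_self)
    have ht : ∀ x ∈ t, 0 < x := fun x hx => hL x (List.mem_cons_of_mem n hx)
    have h := kronVec_unifTo (rowOrd_pos hn _) (rowOrder_pos ht _)
      (rowOrd_dvd n _) (rowOrder_dvd t _)
      (fourier_row_unifTo hn (finProdFinEquiv.symm i).1)
      (ih ht (finProdFinEquiv.symm i).2)
    rw [hrow]
    exact h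

lemma rowVals_of_unifTo {N n : ℕ} {v : Fin N → ℂ} (hN : 0 < N) (hn : 0 < n) (hd : n ∣ N)
    (h : UnifTo N n v) : RowVals N n v := by
  obtain ⟨φ, hφu, hφv⟩ := h
  haveI : NeZero n := ⟨hn.ne'⟩
  rw [rowVals_iff]
  intro t
  have hiff : ∀ j, (v j = cc N * eC ((t : ℕ) / (n : ℝ))) ↔ φ j = ((t : ℕ) : ZMod n) := by
    intro j
    constructor
    · intro hj
      rw [hφv j] at hj
      have h2 := mul_left_cancel₀ (cc_ne_zero hN) hj
      have hn0 : (0 : ℝ) < (n : ℝ) := by exact_mod_cast hn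
      have hb1 : ((φ j).val : ℝ) / n < 1 := by
        rw [div_lt_one hn0]
        exact_mod_cast ZMod.val_lt (φ j)
      have hb2 : ((t : ℕ) : ℝ) / n < 1 := by
        rw [div_lt_one hn0]
        exact_mod_cast t.isLt
      have h3 := eC_inj (by positivity) hb1 (by positivity) hb2 h2
      have hne : (n : ℝ) ≠ 0 := ne_of_gt hn0
      have h4 : ((φ j).val : ℝ) = ((t : ℕ) : ℝ) := by
        rw [div_eq_div_iff hne hne] at h3
        exact mul_right_cancel₀ hne h3
      have h5 : (φ j).val = (t : ℕ) := by exact_mod_cast h4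
      rw [← h5]
      exact (ZMod.natCast_rightInverse (φ j)).symm
    · intro hj
      rw [hφv j, hj, ZMod.val_natCast, Nat.mod_eq_of_lt t.isLt]
  have hcard := hφu ((t : ℕ) : ZMod n)
  refine Eq.trans ?_ hcard
  congr 1
  ext j
  simp only [Finset.mem_filter, Finset.mem_univ, true_and]
  exact hiff j

lemma rowVals_unique {N d n : ℕ} {v : Fin N → ℂ} (hN : 0 < N) (hd : d ∣ N)
    (h1 : RowVals N d v) (hn : 0 < n) (h2 : RowVals N n v) : n = d := by
  have hdpos : 0 < d := Nat.pos_of_dvd_of_pos hd hN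
  rw [rowVals_iff] at h1 h2
  have hcc := cc_ne_zero hN
  -- coverage: every entry of `v` is one of the `d` reference values
  have hdisj : ∀ s ∈ (Finset.univ : Finset (Fin d)), ∀ t ∈ (Finset.univ : Finset (Fin d)),
      s ≠ t → Disjoint
        (Finset.univ.filter fun j => v j = cc N * eC ((s : ℕ) / (d : ℝ)))
        (Finset.univ.filter fun j => v j = cc N * eC ((t : ℕ) / (d : ℝ))) := by
    intro s _ t _ hst
    rw [Finset.disjoint_left]
    intro j hjs hjt
    rw [Finset.mem_filter] at hjs hjt
    apply hst
    have h3 := mul_left_cancel₀ hcc (hjs.2.symm.trans hjt.2)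
    have hd0 : (0 : ℝ) < (d : ℝ) := by exact_mod_cast hdpos
    have hb1 : ((s : ℕ) : ℝ) / d < 1 := by
      rw [div_lt_one hd0]
      exact_mod_cast s.isLt
    have hb2 : ((t : ℕ) : ℝ) / d < 1 := by
      rw [div_lt_one hd0]
      exact_mod_cast t.isLt
    have h4 := eC_inj (by positivity) hb1 (by positivity) hb2 h3
    rw [div_eq_div_iff (ne_of_gt hd0) (ne_of_gt hd0)] at h4
    have h5 := mul_right_cancel₀ (ne_of_gt hd0) h4
    exact Fin.ext (by exact_mod_cast h5)
  have hcard : (Finset.univ.biUnion fun t : Fin d =>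
      Finset.univ.filter fun j => v j = cc N * eC ((t : ℕ) / (d : ℝ))).card = N := by
    rw [Finset.card_biUnion hdisj, Finset.sum_congr rfl (fun t _ => h1 t),
      Finset.sum_const, smul_eq_mul, Finset.card_univ, Fintype.card_fin,
      Nat.mul_div_cancel' hd]
  have huniv := Finset.eq_univ_of_card _ (hcard.trans (Fintype.card_fin N).symm)
  have hcover : ∀ j : Fin N, ∃ t : Fin d, v j = cc N * eC ((t : ℕ) / (d : ℝ)) := by
    intro j
    have hj : j ∈ Finset.univ.biUnion fun t : Fin d =>
        Finset.univ.filter fun j => v j = cc N * eC ((t : ℕ) / (d : ℝ)) := by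
      rw [huniv]
      exact Finset.mem_univ j
    obtain ⟨t, -, ht⟩ := Finset.mem_biUnion.mp hj
    exact ⟨t, (Finset.mem_filter.mp ht).2⟩
  -- the two counts at `t = 0` agree
  have hzz : N / n = N / d := by
    have e1 : ∀ m : ℕ, ∀ hm : 0 < m,
        (Finset.univ.filter fun j => v j = cc N * eC (((⟨0, hm⟩ : Fin m) : ℕ) / (m : ℝ))).card
        = (Finset.univ.filter fun j => v j = cc N * eC 0).card := by
      intro m hm
      refine congrArg Finset.card (Finset.filter_congr fun j _ => ?_)
      norm_num
    rw [← h2 ⟨0, hn⟩, ← h1 ⟨0, hdpos⟩, e1 n hn, e1 d hdpos]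
  -- show n ∣ d
  have hnd : n ∣ d := by
    rcases Nat.lt_or_ge n 2 with hn2 | hn2
    · have hn1 : n = 1 := by omega
      subst hn1
      exact one_dvd d
    · -- use t = 1
      have ht1 := h2 ⟨1, by omega⟩
      have hpos : 0 < N / n := by
        rw [hzz]
        exact Nat.div_pos (Nat.le_of_dvd hN hd) hdpos
      rw [← ht1] at hpos
      obtain ⟨j, hj⟩ := Finset.card_pos.mp hpos
      rw [Finset.mem_filter] at hj
      obtain ⟨s, hs⟩ := hcover j
      have h3 := mul_left_cancel₀ hcc (hj.2.symm.trans hs)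
      have hn0 : (0 : ℝ) < (n : ℝ) := by exact_mod_cast hn
      have hd0 : (0 : ℝ) < (d : ℝ) := by exact_mod_cast hdpos
      have hb1 : (((⟨1, by omega⟩ : Fin n) : ℕ) : ℝ) / n < 1 := by
        rw [div_lt_one hn0]
        exact_mod_cast (⟨1, by omega⟩ : Fin n).isLt
      have hb2 : (((s : ℕ)) : ℝ) / d < 1 := by
        rw [div_lt_one hd0]
        exact_mod_cast s.isLt
      have h4 := eC_inj (by positivity) hb1 (by positivity) hb2 h3
      rw [div_eq_div_iff (ne_of_gt hn0) (ne_of_gt hd0)] at h4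
      norm_num at h4
      have h5 : d = (s : ℕ) * n := by exact_mod_cast h4
      exact ⟨(s : ℕ), by rw [mul_comm]; exact h5⟩
  -- finish: n ∣ d and N/n = N/d forces n = d
  obtain ⟨c, hc⟩ := hnd
  obtain ⟨e, he⟩ := hd
  have hcpos : 0 < c := by
    rcases Nat.eq_zero_or_pos c with h0 | h0
    · rw [h0, mul_zero] at hc
      omega
    · exact h0
  have hepos : 0 < e := by
    rcases Nat.eq_zero_or_pos e with h0 | h0
    · rw [h0, mul_zero] at he
      omega
    · exact h0
  have hNn : N / n = c * e := by
    rw [he, hc, show n * c * e = n * (c * e) from by ring, Nat.mul_div_cancel_left _ hn]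
  have hNd : N / d = e := by
    rw [he, Nat.mul_div_cancel_left _ hdpos]
  rw [hNn, hNd] at hzz
  have hc1 : c = 1 := by
    have h6 : c * e = 1 * e := by omega
    exact Nat.eq_of_mul_eq_mul_right hepos h6
  rw [hc, hc1, mul_one]

lemma card_filter_ext {α : Type*} [Fintype α] {p q : α → Prop} {inst1 : DecidablePred p}
    {inst2 : DecidablePred q} (h : ∀ x, p x ↔ q x) :
    (@Finset.filter _ p inst1 Finset.univ).card = (@Finset.filter _ q inst2 Finset.univ).card := by
  congr 1
  ext x
  simp only [Finset.mem_filter, Finset.mem_univ, true_and]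
  exact h x

lemma card_multiples_fin {n k : ℕ} (hk : 0 < k) (hkn : k ∣ n) :
    (Finset.univ.filter fun i : Fin n => k ∣ (i : ℕ)).card = n / k := by
  obtain ⟨c, rfl⟩ := hkn
  rw [Nat.mul_div_cancel_left c hk]
  refine Eq.trans ?_ (by simp : ((Finset.univ : Finset (Fin c)).card = c))
  refine Finset.card_nbij' (fun i => ⟨(i : ℕ) / k, by
      have h := i.isLt
      exact Nat.div_lt_of_lt_mul (by omega)⟩)
    (fun a => ⟨k * (a : ℕ), by exact (mul_lt_mul_iff_right₀ hk).mpr a.isLt⟩) ?_ ?_ ?_ ?_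
  · intro i _
    exact Finset.mem_univ _
  · intro a _
    simp only [Finset.mem_coe, Finset.mem_filter, Finset.mem_univ, true_and]
    exact Dvd.intro _ rfl
  · intro i hi
    simp only [Finset.mem_coe, Finset.mem_filter, Finset.mem_univ, true_and] at hi
    exact Fin.ext (Nat.mul_div_cancel' hi)
  · intro a _
    exact Fin.ext (Nat.mul_div_cancel_left _ hk)

open Classical in
lemma card_rowOrd_dvd {n : ℕ} (hn : 0 < n) (m : ℕ) :
    (Finset.univ.filter fun i : Fin n => rowOrd n i ∣ m).card = Nat.gcd m n := by
  have hg : 0 < Nat.gcd m n := Nat.gcd_pos_of_pos_right _ hn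
  have hgm : Nat.gcd m n ∣ m := Nat.gcd_dvd_left m n
  have hgn : Nat.gcd m n ∣ n := Nat.gcd_dvd_right m n
  have hiff : ∀ i : Fin n, (rowOrd n i ∣ m ↔ (n / Nat.gcd m n) ∣ (i : ℕ)) := by
    intro i
    have hgi : 0 < Nat.gcd (i : ℕ) n := Nat.gcd_pos_of_pos_right _ hn
    have h1 : rowOrd n i ∣ m ↔ n ∣ Nat.gcd (i : ℕ) n * m :=
      Nat.div_dvd_iff_dvd_mul (Nat.gcd_dvd_right _ _) hgi
    have h2 : n ∣ Nat.gcd (i : ℕ) n * m ↔ n ∣ (i : ℕ) * m := by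
      rw [← Nat.gcd_mul_right]
      constructor
      · intro h
        exact (Nat.dvd_gcd_iff.mp h).1
      · intro h
        exact Nat.dvd_gcd h (Dvd.intro _ rfl)
    have h3 : n ∣ (i : ℕ) * m ↔ (n / Nat.gcd m n) ∣ (i : ℕ) := by
      constructor
      · intro h
        have hcop : Nat.Coprime (n / Nat.gcd m n) (m / Nat.gcd m n) :=
          (Nat.coprime_div_gcd_div_gcd hg).symm
        have key : (n / Nat.gcd m n) ∣ (i : ℕ) * (m / Nat.gcd m n) := by
          obtain ⟨c, hc⟩ := h
          refine ⟨c, ?_⟩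
          rw [← Nat.mul_div_assoc _ hgm, hc, mul_comm n c, Nat.mul_div_assoc c hgn, mul_comm]
        exact hcop.dvd_of_dvd_mul_right key
      · intro h
        have h4 : (n / Nat.gcd m n) * Nat.gcd m n ∣ (i : ℕ) * m :=
          mul_dvd_mul h hgm
        rwa [Nat.div_mul_cancel hgn] at h4
    rw [h1, h2, h3]
  refine Eq.trans (?_ : _ = (Finset.univ.filter fun i : Fin n =>
      (n / Nat.gcd m n) ∣ (i : ℕ)).card) ?_
  · congr 1
    ext i
    simp only [Finset.mem_filter, Finset.mem_univ, true_and]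
    exact hiff i
  · rw [card_multiples_fin (Nat.div_pos (Nat.le_of_dvd hn hgn) hg) (Nat.div_dvd_of_dvd hgn)]
    exact Nat.div_div_self hgn hn.ne'

open Classical in
lemma card_filter_kron {a b : ℕ} (p : Fin a → Prop) (q : Fin b → Prop) :
    (Finset.univ.filter fun i : Fin (a * b) =>
        p (finProdFinEquiv.symm i).1 ∧ q (finProdFinEquiv.symm i).2).card
      = (Finset.univ.filter p).card * (Finset.univ.filter q).card := by
  classical
  have h1 : (Finset.univ.filter fun x : Fin a × Fin b => p x.1 ∧ q x.2).card
      = (Finset.univ.filter p).card * (Finset.univ.filter q).card := by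
    rw [show (Finset.univ.filter p).card * (Finset.univ.filter q).card
      = ((Finset.univ.filter p) ×ˢ (Finset.univ.filter q)).card from
        (Finset.card_product _ _).symm]
    congr 1
    ext x
    simp [Finset.mem_filter, Finset.mem_product]
  exact (card_filter_ext fun i => Iff.rfl).trans
    ((card_filter_equiv (e := finProdFinEquiv.symm)
        (p := fun x : Fin a × Fin b => p x.1 ∧ q x.2)).trans
      ((card_filter_ext fun x => Iff.rfl).trans h1))

open Classical in
lemma countRows_eq {L : List ℕ} (hL : ∀ x ∈ L, 0 < x) {n : ℕ} (hn : 0 < n) :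
    countRows L.prod n (kronFourier L)
      = (Finset.univ.filter fun i => rowOrder L i = n).card := by
  have hN : 0 < L.prod := List.prod_pos hL
  unfold countRows
  refine congrArg Finset.card (Finset.filter_congr fun i _ => ?_)
  constructor
  · intro h
    exact (rowVals_unique hN (rowOrder_dvd L i)
      (rowVals_of_unifTo hN (rowOrder_pos hL i) (rowOrder_dvd L i)
        (kronFourier_row_unifTo hL i)) hn h).symm
  · intro h
    rw [← h]
    exact rowVals_of_unifTo hN (rowOrder_pos hL i) (rowOrder_dvd L i)
      (kronFourier_row_unifTo hL i)

open Classical in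
lemma card_rowOrder_dvd {L : List ℕ} (hL : ∀ x ∈ L, 0 < x) (m : ℕ) :
    (Finset.univ.filter fun i => rowOrder L i ∣ m).card
      = (L.map fun x => Nat.gcd m x).prod := by
  induction L with
  | nil =>
    refine Eq.trans (congrArg Finset.card (?_ : _ = (Finset.univ : Finset (Fin (List.prod ([] : List ℕ)))))) ?_
    · ext x
      simp [rowOrder]
    · rw [Finset.card_univ, Fintype.card_fin]; simp
  | cons n t ih =>
    have hn : 0 < n := hL n (List.mem_cons_self)
    have ht : ∀ x ∈ t, 0 < x := fun x hx => hL x (List.mem_cons_of_mem n hx)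
    rw [List.map_cons]
    conv_rhs => rw [List.prod_cons]
    refine Eq.trans (?_ : _ = (Finset.univ.filter fun i : Fin (n * t.prod) =>
        (rowOrd n (finProdFinEquiv.symm i).1 ∣ m) ∧
        (rowOrder t (finProdFinEquiv.symm i).2 ∣ m)).card) ?_
    · refine congrArg Finset.card (Finset.filter_congr fun i _ => ?_)
      show rowOrder (n :: t) i ∣ m ↔ _
      rw [show rowOrder (n :: t) i = Nat.lcm (rowOrd n (finProdFinEquiv.symm i).1)
        (rowOrder t (finProdFinEquiv.symm i).2) from rfl]
      constructor
      · intro h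
        exact ⟨dvd_trans (Nat.dvd_lcm_left _ _) h, dvd_trans (Nat.dvd_lcm_right _ _) h⟩
      · intro h
        exact Nat.lcm_dvd h.1 h.2
    · exact (card_filter_ext fun i => Iff.rfl).trans
        ((card_filter_kron (fun a => rowOrd n a ∣ m) (fun b => rowOrder t b ∣ m)).trans
          (congrArg₂ (· * ·)
            ((card_filter_ext fun _ => Iff.rfl).trans (card_rowOrd_dvd hn m))
            ((card_filter_ext fun _ => Iff.rfl).trans (ih ht))))

open Classical in
lemma gcd_prod_eq_sum {L : List ℕ} (hL : ∀ x ∈ L, 0 < x) {m : ℕ} (hm : m ≠ 0) :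
    (L.map fun x => Nat.gcd m x).prod
      = ∑ n ∈ m.divisors, countRows L.prod n (kronFourier L) := by
  rw [← card_rowOrder_dvd hL m]
  refine Eq.trans (?_ : _ = (m.divisors.biUnion fun n =>
      Finset.univ.filter fun i => rowOrder L i = n).card) ?_
  · congr 1
    ext i
    simp only [Finset.mem_filter, Finset.mem_univ, true_and, Finset.mem_biUnion,
      Nat.mem_divisors]
    constructor
    · intro h
      exact ⟨rowOrder L i, ⟨h, hm⟩, rfl⟩
    · rintro ⟨k, ⟨hk1, -⟩, rfl⟩
      exact hk1
  · rw [Finset.card_biUnion (fun a _ b _ hab => by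
      show Disjoint _ _
      rw [Finset.disjoint_left]
      intro i hia hib
      rw [Finset.mem_filter] at hia hib
      exact hab (hia.2.symm.trans hib.2))]
    refine Finset.sum_congr rfl fun n hn => ?_
    refine Eq.trans ?_ (countRows_eq hL (Nat.pos_of_mem_divisors hn)).symm
    congr 1

/-! ### Number theory: recovering the list from the gcd products -/

lemma padic_gcd_pp {p : ℕ} (hp : p.Prime) (a : ℕ) {x : ℕ} (hx : IsPrimePow x) :
    Nat.gcd (p ^ a) x = p ^ (min a (padicValNat p x)) := by
  haveI := Fact.mk hp
  obtain ⟨q, f, hq, hf, rfl⟩ := hx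
  have hq' : Nat.Prime q := hq.nat_prime
  by_cases hpq : q = p
  · subst hpq
    rw [padicValNat.prime_pow]
    rcases le_total a f with h | h
    · rw [min_eq_left h, Nat.gcd_eq_left (pow_dvd_pow _ h)]
    · rw [min_eq_right h, Nat.gcd_eq_right (pow_dvd_pow _ h)]
  · have hcop : Nat.Coprime (p ^ a) (q ^ f) :=
      ((Nat.coprime_primes hp hq').mpr (Ne.symm hpq)).pow a f
    have hval : padicValNat p (q ^ f) = 0 := by
      apply padicValNat.eq_zero_of_not_dvd
      intro hdvd
      exact hpq ((Nat.prime_dvd_prime_iff_eq hp hq').mp (hp.dvd_of_dvd_pow hdvd)).symm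
    rw [hval, hcop.gcd_eq_one, _root_.min_zero, pow_zero]

lemma padic_prod_gcd {p : ℕ} (hp : p.Prime) (a : ℕ) {L : List ℕ}
    (hL : ∀ x ∈ L, IsPrimePow x) :
    (L.map fun x => Nat.gcd (p ^ a) x).prod
      = p ^ ((L.map fun x => min a (padicValNat p x)).sum) := by
  induction L with
  | nil => simp
  | cons x t ih =>
    rw [List.map_cons, List.prod_cons, List.map_cons, List.sum_cons, pow_add,
      padic_gcd_pp hp a (hL x (List.mem_cons_self)),
      ih (fun y hy => hL y (List.mem_cons_of_mem _ hy))]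

lemma sum_min_succ (v : ℕ → ℕ) (a : ℕ) (L : List ℕ) :
    (L.map fun x => min (a + 1) (v x)).sum
      = (L.map fun x => min a (v x)).sum + L.countP (fun x => decide (a + 1 ≤ v x)) := by
  induction L with
  | nil => simp
  | cons x t ih =>
    simp only [List.map_cons, List.sum_cons, List.countP_cons, ih, decide_eq_true_eq]
    by_cases h : a + 1 ≤ v x
    · rw [min_eq_left h, min_eq_left (show a ≤ v x by omega), if_pos h]
      omega
    · rw [min_eq_right (show v x ≤ a + 1 by omega), min_eq_right (show v x ≤ a by omega),
        if_neg h]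
      omega

lemma countP_eq_count {p e : ℕ} (hp : p.Prime) (he : 0 < e) {L : List ℕ}
    (hL : ∀ x ∈ L, IsPrimePow x) :
    L.countP (fun x => decide (e ≤ padicValNat p x))
      = L.countP (fun x => decide (e + 1 ≤ padicValNat p x)) + L.count (p ^ e) := by
  induction L with
  | nil => simp
  | cons x t ih =>
    have hx := hL x (List.mem_cons_self)
    have ht : ∀ y ∈ t, IsPrimePow y := fun y hy => hL y (List.mem_cons_of_mem x hy)
    rw [List.countP_cons, List.countP_cons, ih ht]
    have hcnt : (x :: t).count (p ^ e) = t.count (p ^ e) + (if x = p ^ e then 1 else 0) := by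
      rw [List.count_cons]
      by_cases hxe : x = p ^ e
      · simp [hxe]
      · simp [beq_iff_eq, hxe, Ne.symm hxe]
    rw [hcnt]
    have key : (if e ≤ padicValNat p x then 1 else 0)
        = (if e + 1 ≤ padicValNat p x then 1 else 0) + (if x = p ^ e then 1 else 0) := by
      obtain ⟨q, f, hq, hf, rfl⟩ := hx
      have hq' : Nat.Prime q := hq.nat_prime
      haveI := Fact.mk hp
      by_cases hqp : q = p
      · subst hqp
        rw [padicValNat.prime_pow]
        have hfe : (q ^ f = q ^ e) ↔ f = e :=
          ⟨fun h => Nat.pow_right_injective hq'.two_le h, fun h => by rw [h]⟩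
        simp only [hfe]
        split_ifs <;> omega
      · have hval : padicValNat p (q ^ f) = 0 := by
          apply padicValNat.eq_zero_of_not_dvd
          intro hdvd
          exact hqp ((Nat.prime_dvd_prime_iff_eq hp hq').mp (hp.dvd_of_dvd_pow hdvd)).symm
        have hne : q ^ f ≠ p ^ e := by
          intro hcontra
          have hqd : q ∣ p ^ e := by
            rw [← hcontra]
            exact dvd_pow_self q hf.ne'
          exact hqp ((Nat.prime_dvd_prime_iff_eq hq' hp).mp (hq'.dvd_of_dvd_pow hqd))
        rw [hval]
        simp only [hne, if_false]
        split_ifs <;> omega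
    simp only [decide_eq_true_eq]
    omega

lemma perm_of_gcd_prod {Ls Ms : List ℕ} (hL : ∀ x ∈ Ls, IsPrimePow x)
    (hM : ∀ x ∈ Ms, IsPrimePow x)
    (h : ∀ m : ℕ, m ≠ 0 → (Ls.map fun x => Nat.gcd m x).prod = (Ms.map fun x => Nat.gcd m x).prod) :
    Ls.Perm Ms := by
  have hsum : ∀ (p : ℕ), p.Prime → ∀ a : ℕ,
      (Ls.map fun x => min a (padicValNat p x)).sum
        = (Ms.map fun x => min a (padicValNat p x)).sum := by
    intro p hp a
    have h1 := h (p ^ a) (pow_ne_zero a hp.pos.ne')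
    rw [padic_prod_gcd hp a hL, padic_prod_gcd hp a hM] at h1
    exact Nat.pow_right_injective hp.two_le h1
  have hcount : ∀ (p : ℕ), p.Prime → ∀ k : ℕ,
      Ls.countP (fun x => decide (k + 1 ≤ padicValNat p x))
        = Ms.countP (fun x => decide (k + 1 ≤ padicValNat p x)) := by
    intro p hp k
    have h1 := hsum p hp k
    have h2 := hsum p hp (k + 1)
    have e1 := sum_min_succ (padicValNat p) k Ls
    have e2 := sum_min_succ (padicValNat p) k Ms
    omega
  rw [List.perm_iff_count]
  intro x
  by_cases hx : IsPrimePow x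
  · obtain ⟨q, e, hq, he, rfl⟩ := hx
    have hqp : q.Prime := hq.nat_prime
    have hA := countP_eq_count hqp he hL
    have hB := countP_eq_count hqp he hM
    have h2 := hcount q hqp e
    rcases Nat.exists_eq_add_of_le he with ⟨k, hk⟩
    have h1 := hcount q hqp k
    rw [show k + 1 = e from by omega] at h1
    omega
  · rw [List.count_eq_zero.mpr (fun hmem => hx (hL _ hmem)),
      List.count_eq_zero.mpr (fun hmem => hx (hM _ hmem))]

/-! ### Invariance of `countRows` -/

lemma rowVals_comp_perm {N n : ℕ} {v : Fin N → ℂ} (τ : Equiv.Perm (Fin N)) :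
    RowVals N n (v ∘ τ) ↔ RowVals N n v := by
  have key : ∀ (w : Fin N → ℂ) (ρ : Equiv.Perm (Fin N)) (z : ℂ),
      (Finset.univ.filter fun j => (w ∘ ρ) j = z).card
        = (Finset.univ.filter fun j => w j = z).card := by
    intro w ρ z
    exact (card_filter_ext fun _ => Iff.rfl).trans
      ((card_filter_equiv (e := (ρ : Fin N ≃ Fin N)) (p := fun j => w j = z)).trans
        (card_filter_ext fun _ => Iff.rfl))
  constructor
  · intro h
    rw [rowVals_iff] at h ⊢
    intro t
    refine (card_filter_ext fun x => ?_).trans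
      ((key (v ∘ τ) τ.symm _).trans ((card_filter_ext fun _ => Iff.rfl).trans (h t)))
    show v x = _ ↔ ((v ∘ τ) ∘ ⇑τ.symm) x = _
    simp only [Function.comp_apply, Equiv.apply_symm_apply]
  · intro h
    rw [rowVals_iff] at h ⊢
    intro t
    exact (card_filter_ext fun _ => Iff.rfl).trans
      ((key v τ _).trans ((card_filter_ext fun _ => Iff.rfl).trans (h t)))

lemma countRows_submatrix {N n : ℕ} (A : Matrix (Fin N) (Fin N) ℂ)
    (σ τ : Equiv.Perm (Fin N)) :
    countRows N n (A.submatrix σ τ) = countRows N n A := by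
  unfold countRows
  refine Eq.trans (card_filter_ext fun i => ?_)
    ((card_filter_equiv (e := (σ : Fin N ≃ Fin N))
        (p := fun i => RowVals N n (A i))).trans
      (card_filter_ext fun _ => Iff.rfl))
  show RowVals N n (A.submatrix σ τ i) ↔ RowVals N n (A (σ i))
  have hrow : (A.submatrix σ τ) i = (A (σ i)) ∘ τ := rfl
  rw [hrow, rowVals_comp_perm]

lemma countRows_cast {M M' : ℕ} (h : M = M') (B : Matrix (Fin M) (Fin M) ℂ) (n : ℕ) :
    countRows M' n (B.submatrix (finCongr h).symm (finCongr h).symm) = countRows M n B := by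
  subst h
  have hB : B.submatrix (finCongr (rfl : M = M)).symm (finCongr (rfl : M = M)).symm = B := by
    ext i j
    rfl
  rw [hB]

/-! ### Permutation matrices vs submatrix -/

lemma permMatrix_mul {N : ℕ} (A : Matrix (Fin N) (Fin N) ℂ) (σP σQ : Equiv.Perm (Fin N)) :
    (Matrix.of fun i j => if σP j = i then (1 : ℂ) else 0) * A *
      (Matrix.of fun i j => if σQ j = i then (1 : ℂ) else 0)
      = A.submatrix σP.symm σQ := by
  have hPA : ∀ i j, ((Matrix.of fun i j => if σP j = i then (1 : ℂ) else 0) * A) i j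
      = A (σP.symm i) j := by
    intro i j
    rw [Matrix.mul_apply]
    rw [Finset.sum_eq_single (σP.symm i)]
    · simp
    · intro b _ hb
      have : ¬ (σP b = i) := fun hc => hb (by rw [← hc, Equiv.symm_apply_apply])
      simp [this]
    · intro hmem
      exact absurd (Finset.mem_univ _) hmem
  have hAQ : ∀ (B : Matrix (Fin N) (Fin N) ℂ) i j,
      (B * (Matrix.of fun i j => if σQ j = i then (1 : ℂ) else 0)) i j = B i (σQ j) := by
    intro B i j
    rw [Matrix.mul_apply]
    rw [Finset.sum_eq_single (σQ j)]
    · simp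
    · intro b _ hb
      have : ¬ (σQ j = b) := fun hc => hb hc.symm
      simp [this]
    · intro hmem
      exact absurd (Finset.mem_univ _) hmem
  ext i j
  rw [hAQ, hPA]
  rfl

lemma permEquiv_iff {N : ℕ} (A B : Matrix (Fin N) (Fin N) ℂ) :
    (∃ P Q : Matrix (Fin N) (Fin N) ℂ, IsPermMatrix P ∧ IsPermMatrix Q ∧ B = P * A * Q)
      ↔ ∃ σ τ : Equiv.Perm (Fin N), B = A.submatrix σ τ := by
  constructor
  · rintro ⟨P, Q, ⟨σP, hP⟩, ⟨σQ, hQ⟩, hB⟩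
    refine ⟨σP.symm, σQ, ?_⟩
    have hPe : P = Matrix.of fun i j => if σP j = i then (1 : ℂ) else 0 := by
      ext i j
      exact hP i j
    have hQe : Q = Matrix.of fun i j => if σQ j = i then (1 : ℂ) else 0 := by
      ext i j
      exact hQ i j
    rw [hB, hPe, hQe, permMatrix_mul]
  · rintro ⟨σ, τ, hB⟩
    refine ⟨Matrix.of fun i j => if σ.symm j = i then (1 : ℂ) else 0,
      Matrix.of fun i j => if τ j = i then (1 : ℂ) else 0,
      ⟨σ.symm, fun _ _ => rfl⟩, ⟨τ, fun _ _ => rfl⟩, ?_⟩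
    rw [permMatrix_mul, Equiv.symm_symm]
    exact hB

/-! ### Backward direction -/

/-- The reindexing equivalence for the `cons` step. -/
def consEquiv (x : ℕ) {a b : ℕ} (f : Fin b ≃ Fin a) : Fin (x * b) ≃ Fin (x * a) :=
  finProdFinEquiv.symm.trans ((Equiv.prodCongr (Equiv.refl (Fin x)) f).trans finProdFinEquiv)

/-- The reindexing equivalence for the `swap` step. -/
def swapEquiv (x y P : ℕ) : Fin (x * (y * P)) ≃ Fin (y * (x * P)) where
  toFun i := finProdFinEquiv
    ((finProdFinEquiv.symm ((finProdFinEquiv.symm i).2)).1,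
     finProdFinEquiv ((finProdFinEquiv.symm i).1,
       (finProdFinEquiv.symm ((finProdFinEquiv.symm i).2)).2))
  invFun j := finProdFinEquiv
    ((finProdFinEquiv.symm ((finProdFinEquiv.symm j).2)).1,
     finProdFinEquiv ((finProdFinEquiv.symm j).1,
       (finProdFinEquiv.symm ((finProdFinEquiv.symm j).2)).2))
  left_inv i := by
    simp only [Equiv.symm_apply_apply]
    rw [Prod.mk.eta, Equiv.apply_symm_apply, Prod.mk.eta, Equiv.apply_symm_apply]
  right_inv j := by
    simp only [Equiv.symm_apply_apply]
    rw [Prod.mk.eta, Equiv.apply_symm_apply, Prod.mk.eta, Equiv.apply_symm_apply]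

lemma kron_cons {x a b : ℕ} (C : Matrix (Fin x) (Fin x) ℂ) (A : Matrix (Fin a) (Fin a) ℂ)
    (B : Matrix (Fin b) (Fin b) ℂ) (f : Fin b ≃ Fin a) (hf : B = A.submatrix f f) :
    kron C B = (kron C A).submatrix ⇑(consEquiv x f) ⇑(consEquiv x f) := by
  ext i j
  simp only [Matrix.submatrix_apply, kron, Matrix.of_apply, consEquiv, Equiv.trans_apply,
    Equiv.prodCongr_apply, Equiv.coe_refl, Prod.map_fst, Prod.map_snd, id_eq,
    Equiv.symm_apply_apply, hf]

lemma kron_swap {x y P : ℕ} (C : Matrix (Fin x) (Fin x) ℂ) (D : Matrix (Fin y) (Fin y) ℂ)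
    (A : Matrix (Fin P) (Fin P) ℂ) :
    kron C (kron D A)
      = (kron D (kron C A)).submatrix ⇑(swapEquiv x y P) ⇑(swapEquiv x y P) := by
  ext i j
  simp only [Matrix.submatrix_apply, kron, Matrix.of_apply, swapEquiv, Equiv.coe_fn_mk,
    Equiv.symm_apply_apply]
  ring

lemma kronFourier_perm {L M : List ℕ} (h : L.Perm M) :
    ∃ f : Fin M.prod ≃ Fin L.prod, kronFourier M = (kronFourier L).submatrix f f := by
  induction h with
  | nil => exact ⟨Equiv.refl _, by ext i j; rfl⟩
  | @cons x l₁ l₂ h ih =>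
    obtain ⟨f, hf⟩ := ih
    exact ⟨consEquiv x f, kron_cons (Fourier x) _ _ f hf⟩
  | swap x y l =>
    exact ⟨swapEquiv x y l.prod, kron_swap (Fourier x) (Fourier y) (kronFourier l)⟩
  | trans h₁ h₂ ih₁ ih₂ =>
    obtain ⟨f₁, hf₁⟩ := ih₁
    obtain ⟨f₂, hf₂⟩ := ih₂
    refine ⟨f₂.trans f₁, ?_⟩
    rw [hf₂, hf₁]
    ext i j
    simp [Matrix.submatrix_apply]

end Stmt15

end FFKPAux

/-- two FFKPs of the same size are permutation equivalent iff their
factor multisets coincide. -/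
theorem stmt15 (Ls Ms : List ℕ) (hL : ∀ n ∈ Ls, IsPrimePow n) (hM : ∀ n ∈ Ms, IsPrimePow n)
    (hsize : Ls.prod = Ms.prod) :
    (∃ P Q : Matrix (Fin Ls.prod) (Fin Ls.prod) ℂ,
      IsPermMatrix P ∧ IsPermMatrix Q ∧
      Matrix.reindex (finCongr hsize.symm) (finCongr hsize.symm) (kronFourier Ms)
        = P * kronFourier Ls * Q) ↔ Ls.Perm Ms := by
  constructor
  · rintro ⟨P, Q, hP, hQ, hEq⟩
    obtain ⟨σ, τ, hsub⟩ := (Stmt15.permEquiv_iff (kronFourier Ls)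
      (Matrix.reindex (finCongr hsize.symm) (finCongr hsize.symm) (kronFourier Ms))).mp
      ⟨P, Q, hP, hQ, hEq⟩
    have hLpos : ∀ x ∈ Ls, 0 < x := fun x hx => (hL x hx).pos
    have hMpos : ∀ x ∈ Ms, 0 < x := fun x hx => (hM x hx).pos
    apply Stmt15.perm_of_gcd_prod hL hM
    intro m hm
    rw [Stmt15.gcd_prod_eq_sum hLpos hm, Stmt15.gcd_prod_eq_sum hMpos hm]
    refine Finset.sum_congr rfl fun n _ => ?_
    calc countRows Ls.prod n (kronFourier Ls)
        = countRows Ls.prod n ((kronFourier Ls).submatrix σ τ) :=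
          (Stmt15.countRows_submatrix _ _ _).symm
      _ = countRows Ls.prod n
            (Matrix.reindex (finCongr hsize.symm) (finCongr hsize.symm) (kronFourier Ms)) := by
          rw [hsub]
      _ = countRows Ms.prod n (kronFourier Ms) := by
          rw [show Matrix.reindex (finCongr hsize.symm) (finCongr hsize.symm) (kronFourier Ms)
            = (kronFourier Ms).submatrix (finCongr hsize.symm).symm (finCongr hsize.symm).symm
            from rfl]
          exact Stmt15.countRows_cast hsize.symm (kronFourier Ms) n
  · intro hperm
    obtain ⟨f, hf⟩ := Stmt15.kronFourier_perm hperm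
    refine (Stmt15.permEquiv_iff _ _).mpr
      ⟨(finCongr hsize.symm).symm.trans f, (finCongr hsize.symm).symm.trans f, ?_⟩
    show (kronFourier Ms).submatrix (finCongr hsize.symm).symm (finCongr hsize.symm).symm = _
    rw [hf]
    ext i j
    simp [Matrix.submatrix_apply]
end

section
/- Let U be an n×n unitary matrix, fix indices i, j and target phases α_1,...,α_n (for row i) and β_1,...,β_n (for column j) with α_j = β_i, and assume the entries of U are nonzero. If D_r, D_c are unitary diagonal matrices with [D_c]_{1,1} = 1 such that the entries of D_r U D_c in row i have phases α_1,...,α_n and in column j have phases β_1,...,β_n, then D_r and D_c are uniquely determined. -/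
open Matrix

/-- uniqueness of the unitary diagonal matrices `D_r, D_c` with
`[D_c]_{1,1} = 1` producing prescribed phases in the `i`-th row and `j`-th column
of `D_r U D_c`, for `U` unitary with nonzero entries. -/
theorem stmt16 (n : ℕ) (hn : 0 < n) (U : Matrix (Fin n) (Fin n) ℂ)
    (hU : U ∈ Matrix.unitaryGroup (Fin n) ℂ) (hUnz : ∀ k l, U k l ≠ 0)
    (i j : Fin n) (α β : Fin n → ℝ) (hαβ : α j = β i)
    (Dr Dc Dr' Dc' : Matrix (Fin n) (Fin n) ℂ)
    (hDr : IsUnitaryDiag Dr) (hDc : IsUnitaryDiag Dc)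
    (hDr' : IsUnitaryDiag Dr') (hDc' : IsUnitaryDiag Dc')
    (hDc1 : Dc ⟨0, hn⟩ ⟨0, hn⟩ = 1) (hDc1' : Dc' ⟨0, hn⟩ ⟨0, hn⟩ = 1)
    (hrow : ∀ l, (Dr * U * Dc) i l
      = ((‖U i l‖ : ℝ) : ℂ) * Complex.exp ((α l : ℂ) * Complex.I))
    (hcol : ∀ k, (Dr * U * Dc) k j
      = ((‖U k j‖ : ℝ) : ℂ) * Complex.exp ((β k : ℂ) * Complex.I))
    (hrow' : ∀ l, (Dr' * U * Dc') i l
      = ((‖U i l‖ : ℝ) : ℂ) * Complex.exp ((α l : ℂ) * Complex.I))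
    (hcol' : ∀ k, (Dr' * U * Dc') k j
      = ((‖U k j‖ : ℝ) : ℂ) * Complex.exp ((β k : ℂ) * Complex.I)) :
    Dr = Dr' ∧ Dc = Dc' := by
  obtain ⟨r, hr, rfl⟩ := hDr
  obtain ⟨c, hc, rfl⟩ := hDc
  obtain ⟨r', hr', rfl⟩ := hDr'
  obtain ⟨c', hc', rfl⟩ := hDc'
  have happ : ∀ (a b : Fin n → ℂ) (k l : Fin n),
      (Matrix.diagonal a * U * Matrix.diagonal b) k l = a k * U k l * b l := by
    intro a b k l
    rw [Matrix.mul_diagonal, Matrix.diagonal_mul]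
  have hz : Fin n := ⟨0, hn⟩
  have hc0 : c ⟨0, hn⟩ = 1 := by simpa [Matrix.diagonal] using hDc1
  have hc0' : c' ⟨0, hn⟩ = 1 := by simpa [Matrix.diagonal] using hDc1'
  have hcne : ∀ l, c l ≠ 0 := fun l h => by have := hc l; rw [h] at this; simp at this
  have hrne : ∀ k, r k ≠ 0 := fun k h => by have := hr k; rw [h] at this; simp at this
  -- row equality
  have hroweq : ∀ l, r i * U i l * c l = r' i * U i l * c' l := by
    intro l
    have := (hrow l).trans (hrow' l).symm
    rwa [happ, happ] at this
  -- from l = 0: r i = r' i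
  have hri : r i = r' i := by
    have := hroweq ⟨0, hn⟩
    rw [hc0, hc0'] at this
    have h2 := mul_right_cancel₀ (hUnz i ⟨0, hn⟩) (by simpa [mul_assoc] using this)
    exact h2
  -- then c = c'
  have hceq : ∀ l, c l = c' l := by
    intro l
    have := hroweq l
    rw [hri] at this
    exact mul_left_cancel₀ (mul_ne_zero (by rw [← hri]; exact hrne i) (hUnz i l)) this
  -- column equality
  have hcoleq : ∀ k, r k * U k j * c j = r' k * U k j * c' j := by
    intro k
    have := (hcol k).trans (hcol' k).symm
    rwa [happ, happ] at this
  have hreq : ∀ k, r k = r' k := by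
    intro k
    have := hcoleq k
    rw [← hceq j] at this
    have := mul_right_cancel₀ (hcne j) this
    exact mul_right_cancel₀ (hUnz k j) this
  constructor
  · exact congrArg Matrix.diagonal (funext hreq)
  · exact congrArg Matrix.diagonal (funext hceq)
end

section
/- Let F_n be the n×n Fourier matrix and suppose D_r, D_c are unitary diagonal matrices such that F_n' = D_r F_n D_c has its i-th row and j-th column filled with the constant 1/√n. Then F_n' = P_r F_n P_c where P_r is the cyclic permutation sending row k to row k + (i−1) mod n and P_c the cyclic permutation sending column l to column l + (j−1) mod n. -/
open Matrix

/-- if `D_r F_n D_c` has its `i`-th row and `j`-th column filled with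
`1/√n`, then it equals `F_n` with rows and columns cyclically shifted by `i` and `j`
(0-based). -/
theorem stmt17 (n : ℕ) (hn : 0 < n) (i j : Fin n)
    (Dr Dc : Matrix (Fin n) (Fin n) ℂ) (hDr : IsUnitaryDiag Dr) (hDc : IsUnitaryDiag Dc)
    (hrow : ∀ l, (Dr * Fourier n * Dc) i l = ((1 / Real.sqrt n : ℝ) : ℂ))
    (hcol : ∀ k, (Dr * Fourier n * Dc) k j = ((1 / Real.sqrt n : ℝ) : ℂ)) :
    ∀ k l, (Dr * Fourier n * Dc) k l
      = Fourier n ⟨(k.val + (n - i.val)) % n, Nat.mod_lt _ hn⟩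
                  ⟨(l.val + (n - j.val)) % n, Nat.mod_lt _ hn⟩ := by
  obtain ⟨r, hr1, rfl⟩ := hDr
  obtain ⟨c, hc1, rfl⟩ := hDc
  set s : ℂ := ((1 / Real.sqrt n : ℝ) : ℂ) with hs
  have hn' : (n : ℂ) ≠ 0 := Nat.cast_ne_zero.mpr hn.ne'
  have hsqrt : 0 < Real.sqrt n := Real.sqrt_pos.mpr (by exact_mod_cast hn)
  have hsne : s ≠ 0 := by
    rw [hs]
    exact_mod_cast (one_div_pos.mpr hsqrt).ne'
  set E : ℤ → ℂ := fun m => Complex.exp (2 * Real.pi * Complex.I * m / n) with hE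
  have Eadd : ∀ a b : ℤ, E (a + b) = E a * E b := by
    intro a b
    rw [hE]
    simp only
    rw [← Complex.exp_add]
    congr 1
    push_cast
    ring
  have Ene : ∀ a : ℤ, E a ≠ 0 := fun a => Complex.exp_ne_zero _
  have Emod : ∀ a b : ℤ, a % (n : ℤ) = b % (n : ℤ) → E a = E b := by
    intro a b h
    have hd : (n : ℤ) ∣ a - b := Int.ModEq.dvd (Int.ModEq.symm h)
    obtain ⟨t, ht⟩ := hd
    have ha : a = b + n * t := by linarith
    rw [ha, Eadd]
    have : E ((n : ℤ) * t) = 1 := by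
      rw [hE]
      simp only
      have : 2 * (Real.pi : ℂ) * Complex.I * ((n : ℤ) * t : ℤ) / n
          = (t : ℤ) * (2 * Real.pi * Complex.I) := by
        push_cast
        field_simp
      rw [this, Complex.exp_int_mul_two_pi_mul_I]
    rw [this, mul_one]
  have hF : ∀ k l : Fin n, Fourier n k l = s * E ((k : ℤ) * (l : ℤ)) := by
    intro k l
    rw [Fourier, hE]
    simp only [Matrix.of_apply]
    congr 2
    push_cast
    ring
  have hM : ∀ k l, (Matrix.diagonal r * Fourier n * Matrix.diagonal c) k l
      = r k * Fourier n k l * c l := by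
    intro k l
    rw [Matrix.mul_diagonal, Matrix.diagonal_mul]
  have hA : ∀ l : Fin n, r i * c l * E ((i : ℤ) * l) = 1 := by
    intro l
    have h := hrow l
    rw [hM, hF] at h
    apply mul_left_cancel₀ hsne
    rw [mul_one]
    linear_combination h
  have hB : ∀ k : Fin n, r k * c j * E ((k : ℤ) * j) = 1 := by
    intro k
    have h := hcol k
    rw [hM, hF] at h
    apply mul_left_cancel₀ hsne
    rw [mul_one]
    linear_combination h
  intro k l
  rw [hM, hF, hF]
  set k' : Fin n := ⟨(k.val + (n - i.val)) % n, Nat.mod_lt _ hn⟩ with hk'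
  set l' : Fin n := ⟨(l.val + (n - j.val)) % n, Nat.mod_lt _ hn⟩ with hl'
  have hkmod : ((k' : ℤ)) % n = ((k : ℤ) - i) % n := by
    have hi : (i : ℕ) ≤ n := i.isLt.le
    have e1 : ((k' : ℤ)) = ((k : ℤ) + ((n : ℤ) - i)) % n := by
      rw [hk']
      simp only [Fin.val_mk]
      push_cast [Nat.cast_sub hi]
      ring_nf
    rw [e1, Int.emod_emod_of_dvd _ dvd_rfl]
    have e2 : (k : ℤ) + ((n : ℤ) - i) = ((k : ℤ) - i) + (n : ℤ) * 1 := by ring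
    rw [e2, Int.add_mul_emod_self_left]
  have hlmod : ((l' : ℤ)) % n = ((l : ℤ) - j) % n := by
    have hj : (j : ℕ) ≤ n := j.isLt.le
    have e1 : ((l' : ℤ)) = ((l : ℤ) + ((n : ℤ) - j)) % n := by
      rw [hl']
      simp only [Fin.val_mk]
      push_cast [Nat.cast_sub hj]
      ring_nf
    rw [e1, Int.emod_emod_of_dvd _ dvd_rfl]
    have e2 : (l : ℤ) + ((n : ℤ) - j) = ((l : ℤ) - j) + (n : ℤ) * 1 := by ring
    rw [e2, Int.add_mul_emod_self_left]
  have hprod : ((k' : ℤ) * l') % n = (((k : ℤ) - i) * ((l : ℤ) - j)) % n :=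
    Int.ModEq.mul hkmod hlmod
  have hEV : E ((k' : ℤ) * l') = E (((k : ℤ) - i) * ((l : ℤ) - j)) := Emod _ _ hprod
  rw [hEV]
  -- abbreviations
  have h1 := hA l
  have h2 := hB k
  have h3 := hB i
  have h4 : E (((k : ℤ) - i) * ((l : ℤ) - j)) * (E ((k : ℤ) * j) * E ((i : ℤ) * l))
      = E ((k : ℤ) * l) * E ((i : ℤ) * j) := by
    rw [← Eadd, ← Eadd, ← Eadd]
    congr 1
    ring
  have hF0 : r i * c j * E ((k : ℤ) * j) * E ((i : ℤ) * l) ≠ 0 := by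
    have hpq : r i * c j ≠ 0 := by
      intro hz
      rw [hz, zero_mul] at h3
      exact one_ne_zero h3.symm
    exact mul_ne_zero (mul_ne_zero hpq (Ene _)) (Ene _)
  apply mul_left_cancel₀ hF0
  linear_combination (s * E ((k : ℤ) * l) * (r k * c j * E ((k : ℤ) * j))) * h1
    + (s * E ((k : ℤ) * l)) * h2
    - (s * r i * c j) * h4
    - (s * E ((k : ℤ) * l)) * h3
end

section
/- Two Kronecker products of unitary Fourier matrices F' and F'' of the same size are permutation equivalent (F'' = P_r F' P_c for permutation matrices) if and only if they are permutation-phasing equivalent (F'' = P_r D_r F' D_c P_c for permutation matrices P_r, P_c and unitary diagonal matrices D_r, D_c). -/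
open Matrix

noncomputable def fc (n : ℕ) : ℂ := ((1 / Real.sqrt n : ℝ) : ℂ)

noncomputable def kc (L : List ℕ) : ℂ := fc L.prod

noncomputable def psi (n a : ℕ) : ℂ :=
  Complex.exp (2 * Real.pi * Complex.I * (a : ℂ) / n)

lemma psi_add (n a b : ℕ) : psi n (a + b) = psi n a * psi n b := by
  rw [psi, psi, psi, ← Complex.exp_add]
  congr 1
  push_cast
  ring

lemma psi_nmul (n a : ℕ) (hn : 0 < n) : psi n (n * a) = 1 := by
  rw [psi, show 2 * (Real.pi:ℂ) * Complex.I * ((n*a : ℕ) : ℂ) / n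
      = (a:ℂ) * (2 * Real.pi * Complex.I) by
    have : (n:ℂ) ≠ 0 := Nat.cast_ne_zero.mpr hn.ne'
    push_cast
    field_simp]
  exact Complex.exp_nat_mul_two_pi_mul_I a

lemma psi_mod (n a : ℕ) (hn : 0 < n) : psi n (a % n) = psi n a := by
  conv_rhs => rw [← Nat.mod_add_div a n, psi_add, psi_nmul n _ hn, mul_one]

lemma psi_congr (n a b : ℕ) (hn : 0 < n) (h : a % n = b % n) : psi n a = psi n b := by
  rw [← psi_mod n a hn, h, psi_mod n b hn]

lemma psi_zero (n : ℕ) : psi n 0 = 1 := by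
  simp [psi]

lemma fc_ne_zero (n : ℕ) (hn : 0 < n) : fc n ≠ 0 := by
  simp only [fc, ne_eq, Complex.ofReal_eq_zero, one_div, inv_eq_zero]
  positivity

lemma Fourier_eq (n : ℕ) (i j : Fin n) :
    Fourier n i j = fc n * psi n (i.1 * j.1) := by
  simp only [Fourier, Matrix.of_apply, fc, psi]
  congr 2
  push_cast
  ring

lemma Fourier_ne_zero (n : ℕ) (i j : Fin n) : Fourier n i j ≠ 0 := by
  rw [Fourier_eq]
  exact mul_ne_zero (fc_ne_zero n i.pos) (Complex.exp_ne_zero _)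

def addFin {n : ℕ} (x y : Fin n) : Fin n := ⟨(x.1 + y.1) % n, Nat.mod_lt _ x.pos⟩

def negFin {n : ℕ} (x : Fin n) : Fin n := ⟨(n - x.1) % n, Nat.mod_lt _ x.pos⟩

lemma addFin_negFin {n : ℕ} (x u : Fin n) : addFin (addFin x u) (negFin u) = x := by
  apply Fin.ext
  show ((x.1 + u.1) % n + (n - u.1) % n) % n = x.1
  rw [← Nat.add_mod, show x.1 + u.1 + (n - u.1) = x.1 + n by omega,
    Nat.add_mod_right, Nat.mod_eq_of_lt x.isLt]

lemma negFin_addFin {n : ℕ} (x u : Fin n) : addFin (addFin x (negFin u)) u = x := by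
  apply Fin.ext
  show ((x.1 + (n - u.1) % n) % n + u.1) % n = x.1
  rw [Nat.mod_add_mod, Nat.add_right_comm, Nat.add_mod_mod,
    show x.1 + u.1 + (n - u.1) = x.1 + n by omega,
    Nat.add_mod_right, Nat.mod_eq_of_lt x.isLt]

lemma Fourier_key (n : ℕ) (x y p q : Fin n) :
    Fourier n (addFin x (negFin p)) (addFin y (negFin q)) * Fourier n x q * Fourier n p y
      = Fourier n x y * Fourier n p q * fc n := by
  have hn : 0 < n := x.pos
  have hp : p.1 ≤ n := p.isLt.le
  have hq : q.1 ≤ n := q.isLt.le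
  rw [Fourier_eq, Fourier_eq, Fourier_eq, Fourier_eq, Fourier_eq]
  have hA : (addFin x (negFin p)).1 % n = (x.1 + (n - p.1)) % n := by
    show (x.1 + (n - p.1) % n) % n % n = _
    rw [Nat.mod_mod_of_dvd _ dvd_rfl, Nat.add_mod_mod]
  have hB : (addFin y (negFin q)).1 % n = (y.1 + (n - q.1)) % n := by
    show (y.1 + (n - q.1) % n) % n % n = _
    rw [Nat.mod_mod_of_dvd _ dvd_rfl, Nat.add_mod_mod]
  have hAB : psi n ((addFin x (negFin p)).1 * (addFin y (negFin q)).1)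
      = psi n ((x.1 + (n - p.1)) * (y.1 + (n - q.1))) := by
    apply psi_congr _ _ _ hn
    rw [Nat.mul_mod, hA, hB, ← Nat.mul_mod]
  rw [hAB]
  have hid : (x.1 + (n - p.1)) * (y.1 + (n - q.1)) + x.1 * q.1 + p.1 * y.1
        + n * p.1 + n * q.1
      = x.1 * y.1 + p.1 * q.1 + n * x.1 + n * y.1 + n * n := by
    zify [hp, hq]
    ring
  have := congrArg (psi n) hid
  simp only [psi_add, psi_nmul n _ hn, mul_one] at this
  linear_combination (fc n * fc n * fc n) * this

def kAdd : (L : List ℕ) → Fin L.prod → Fin L.prod → Fin L.prod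
  | [], x, _ => x
  | _ :: t, x, y =>
    finProdFinEquiv (addFin (finProdFinEquiv.symm x).1 (finProdFinEquiv.symm y).1,
      kAdd t (finProdFinEquiv.symm x).2 (finProdFinEquiv.symm y).2)

def kNeg : (L : List ℕ) → Fin L.prod → Fin L.prod
  | [], x => x
  | _ :: t, x =>
    finProdFinEquiv (negFin (finProdFinEquiv.symm x).1, kNeg t (finProdFinEquiv.symm x).2)

lemma kAdd_kNeg : ∀ (L : List ℕ) (x u : Fin L.prod), kAdd L (kAdd L x u) (kNeg L u) = x
  | [], x, u => rfl
  | n :: t, x, u => by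
    show finProdFinEquiv _ = x
    rw [← Equiv.apply_symm_apply finProdFinEquiv x]
    congr 1
    simp only [kAdd, kNeg, Equiv.symm_apply_apply]
    exact Prod.ext (addFin_negFin _ _) (kAdd_kNeg t _ _)

lemma kNeg_kAdd : ∀ (L : List ℕ) (x u : Fin L.prod), kAdd L (kAdd L x (kNeg L u)) u = x
  | [], x, u => rfl
  | n :: t, x, u => by
    show finProdFinEquiv _ = x
    rw [← Equiv.apply_symm_apply finProdFinEquiv x]
    congr 1
    simp only [kAdd, kNeg, Equiv.symm_apply_apply]
    exact Prod.ext (negFin_addFin _ _) (kNeg_kAdd t _ _)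

/-- The translation by `u` as a permutation. -/
def addE (L : List ℕ) (u : Fin L.prod) : Equiv.Perm (Fin L.prod) where
  toFun x := kAdd L x u
  invFun x := kAdd L x (kNeg L u)
  left_inv x := kAdd_kNeg L x u
  right_inv x := kNeg_kAdd L x u

lemma kc_nil : kc [] = 1 := by
  simp [kc, fc]

lemma kc_cons (n : ℕ) (t : List ℕ) : kc (n :: t) = fc n * kc t := by
  simp only [kc, fc, List.prod_cons, ← Complex.ofReal_mul]
  congr 1
  rw [Nat.cast_mul, Real.sqrt_mul (Nat.cast_nonneg n)]
  rw [one_div, one_div, one_div, mul_inv]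

lemma kc_congr {L M : List ℕ} (h : L.prod = M.prod) : kc L = kc M := by
  simp [kc, h]

lemma kc_ne_zero (L : List ℕ) (h : 0 < L.prod) : kc L ≠ 0 := fc_ne_zero _ h

lemma finProdFinEquiv_symm_zero {m n : ℕ} (h : 0 < m * n) :
    finProdFinEquiv.symm (⟨0, h⟩ : Fin (m * n))
      = (⟨0, Nat.pos_of_ne_zero (by rintro rfl; simp at h)⟩,
         ⟨0, Nat.pos_of_ne_zero (by rintro rfl; simp at h)⟩) := by
  apply finProdFinEquiv.injective
  rw [Equiv.apply_symm_apply]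
  apply Fin.ext
  simp

lemma fin_prod_nil_eq (x y : Fin (List.prod ([] : List ℕ))) : x = y := by
  apply Fin.ext
  have hx := x.isLt
  have hy := y.isLt
  simp only [List.prod_nil] at hx hy
  omega

lemma kF_ne_zero : ∀ (L : List ℕ) (x y : Fin L.prod), kronFourier L x y ≠ 0
  | [], x, y => by
    have : x = y := fin_prod_nil_eq x y
    subst this
    show (1 : Matrix (Fin 1) (Fin 1) ℂ) x x ≠ 0
    exact fun h => one_ne_zero ((Matrix.one_apply_eq x).symm.trans h)
  | n :: t, x, y => by
    show Fourier n _ _ * kronFourier t _ _ ≠ 0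
    exact mul_ne_zero (Fourier_ne_zero _ _ _) (kF_ne_zero t _ _)

lemma kF_zero_left : ∀ (L : List ℕ) (h : 0 < L.prod) (y : Fin L.prod),
    kronFourier L ⟨0, h⟩ y = kc L
  | [], h, y => by
    have : (⟨0, h⟩ : Fin (List.prod [])) = y := fin_prod_nil_eq _ _
    rw [this, kc_nil]
    exact Matrix.one_apply_eq y
  | n :: t, h, y => by
    show Fourier n (finProdFinEquiv.symm ⟨0, h⟩).1 _
        * kronFourier t (finProdFinEquiv.symm ⟨0, h⟩).2 _ = _
    rw [finProdFinEquiv_symm_zero h]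
    rw [kc_cons]
    exact congrArg₂ (· * ·) (by rw [Fourier_eq]; simp [psi_zero]) (kF_zero_left t _ _)

lemma kF_zero_right : ∀ (L : List ℕ) (h : 0 < L.prod) (x : Fin L.prod),
    kronFourier L x ⟨0, h⟩ = kc L
  | [], h, x => by
    have : x = (⟨0, h⟩ : Fin (List.prod [])) := fin_prod_nil_eq _ _
    rw [this, kc_nil]
    exact Matrix.one_apply_eq _
  | n :: t, h, x => by
    show Fourier n _ (finProdFinEquiv.symm ⟨0, h⟩).1
        * kronFourier t _ (finProdFinEquiv.symm ⟨0, h⟩).2 = _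
    rw [finProdFinEquiv_symm_zero h]
    rw [kc_cons]
    exact congrArg₂ (· * ·) (by rw [Fourier_eq]; simp [psi_zero]) (kF_zero_right t _ _)

lemma kF_key : ∀ (L : List ℕ) (x y p q : Fin L.prod),
    kronFourier L (kAdd L x (kNeg L p)) (kAdd L y (kNeg L q))
        * kronFourier L x q * kronFourier L p y
      = kronFourier L x y * kronFourier L p q * kc L
  | [], x, y, p, q => by
    have h1 : ∀ a b : Fin (List.prod []), kronFourier [] a b = 1 := by
      intro a b
      have : a = b := fin_prod_nil_eq a b
      subst this
      exact Matrix.one_apply_eq a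
    simp [h1, kc_nil]
  | n :: t, x, y, p, q => by
    have hexp : ∀ a b : Fin ((n :: t).prod), kronFourier (n :: t) a b
        = Fourier n (finProdFinEquiv.symm a).1 (finProdFinEquiv.symm b).1
          * kronFourier t (finProdFinEquiv.symm a).2 (finProdFinEquiv.symm b).2 :=
      fun a b => rfl
    have hadd : ∀ a b : Fin ((n :: t).prod),
        finProdFinEquiv.symm (kAdd (n :: t) a (kNeg (n :: t) b))
          = (addFin (finProdFinEquiv.symm a).1 (negFin (finProdFinEquiv.symm b).1),
             kAdd t (finProdFinEquiv.symm a).2 (kNeg t (finProdFinEquiv.symm b).2)) := by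
      intro a b
      show finProdFinEquiv.symm (finProdFinEquiv _) = _
      rw [Equiv.symm_apply_apply]
      simp only [kNeg, Equiv.symm_apply_apply]
      rfl
    simp only [hexp, hadd]
    rw [kc_cons]
    have h1 := Fourier_key n (finProdFinEquiv.symm x).1 (finProdFinEquiv.symm y).1
      (finProdFinEquiv.symm p).1 (finProdFinEquiv.symm q).1
    have h2 := kF_key t (finProdFinEquiv.symm x).2 (finProdFinEquiv.symm y).2
      (finProdFinEquiv.symm p).2 (finProdFinEquiv.symm q).2
    linear_combination (kronFourier t (kAdd t (finProdFinEquiv.symm x).2 (kNeg t (finProdFinEquiv.symm p).2))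
        (kAdd t (finProdFinEquiv.symm y).2 (kNeg t (finProdFinEquiv.symm q).2))
        * kronFourier t (finProdFinEquiv.symm x).2 (finProdFinEquiv.symm q).2
        * kronFourier t (finProdFinEquiv.symm p).2 (finProdFinEquiv.symm y).2) * h1
      + (Fourier n (finProdFinEquiv.symm x).1 (finProdFinEquiv.symm y).1
        * Fourier n (finProdFinEquiv.symm p).1 (finProdFinEquiv.symm q).1 * fc n) * h2

/-- Permutation matrix from a permutation. -/
def permM {N : ℕ} (σ : Equiv.Perm (Fin N)) : Matrix (Fin N) (Fin N) ℂ :=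
  Matrix.of fun i j => if σ j = i then (1 : ℂ) else 0

lemma isPermMatrix_permM {N : ℕ} (σ : Equiv.Perm (Fin N)) : IsPermMatrix (permM σ) :=
  ⟨σ, fun _ _ => rfl⟩

lemma permM_mul_apply {N : ℕ} (σ : Equiv.Perm (Fin N)) (B : Matrix (Fin N) (Fin N) ℂ)
    (i j : Fin N) : (permM σ * B) i j = B (σ.symm i) j := by
  rw [Matrix.mul_apply]
  simp only [permM, Matrix.of_apply, Equiv.apply_eq_iff_eq_symm_apply, ite_mul, one_mul,
    zero_mul]
  simp [Finset.sum_ite_eq']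

lemma mul_permM_apply {N : ℕ} (B : Matrix (Fin N) (Fin N) ℂ) (τ : Equiv.Perm (Fin N))
    (i j : Fin N) : (B * permM τ) i j = B i (τ j) := by
  rw [Matrix.mul_apply]
  simp only [permM, Matrix.of_apply, mul_ite, mul_one, mul_zero]
  simp [Finset.sum_ite_eq]

/-- two Kronecker products of Fourier matrices of the same size are
permutation equivalent iff they are permutation-phasing equivalent. -/
theorem stmt19 (Ls Ms : List ℕ) (hL : ∀ n ∈ Ls, 0 < n) (hM : ∀ n ∈ Ms, 0 < n)
    (hsize : Ls.prod = Ms.prod) :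
    (∃ P Q : Matrix (Fin Ls.prod) (Fin Ls.prod) ℂ,
      IsPermMatrix P ∧ IsPermMatrix Q ∧
      Matrix.reindex (finCongr hsize.symm) (finCongr hsize.symm) (kronFourier Ms)
        = P * kronFourier Ls * Q) ↔
    (∃ P Q Dr Dc : Matrix (Fin Ls.prod) (Fin Ls.prod) ℂ,
      IsPermMatrix P ∧ IsPermMatrix Q ∧ IsUnitaryDiag Dr ∧ IsUnitaryDiag Dc ∧
      Matrix.reindex (finCongr hsize.symm) (finCongr hsize.symm) (kronFourier Ms)
        = P * Dr * kronFourier Ls * Dc * Q) := by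
  have hN : 0 < Ls.prod := List.prod_pos hL
  have hNM : 0 < Ms.prod := hsize ▸ hN
  constructor
  · rintro ⟨P, Q, hP, hQ, hEq⟩
    refine ⟨P, Q, 1, 1, hP, hQ,
      ⟨fun _ => 1, fun _ => by simp, (Matrix.diagonal_one).symm⟩,
      ⟨fun _ => 1, fun _ => by simp, (Matrix.diagonal_one).symm⟩, ?_⟩
    simp only [Matrix.mul_one, mul_one]
    exact hEq
  · rintro ⟨P, Q, Dr, Dc, ⟨σ, hP⟩, ⟨τ, hQ⟩, ⟨dr, hdr, rfl⟩, ⟨dc, hdc, rfl⟩, hEq⟩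
    have hPm : P = permM σ := by
      ext i j
      rw [hP]
      rfl
    have hQm : Q = permM τ := by
      ext i j
      rw [hQ]
      rfl
    subst hPm hQm
    set A := kronFourier Ls with hA
    set M := Matrix.reindex (finCongr hsize.symm) (finCongr hsize.symm) (kronFourier Ms)
      with hMdef
    set z : Fin Ls.prod := ⟨0, hN⟩ with hz
    -- entrywise formula for the right-hand side
    have entry : ∀ i j, M i j = dr (σ.symm i) * A (σ.symm i) (τ j) * dc (τ j) := by
      intro i j
      rw [hEq, mul_permM_apply, Matrix.mul_diagonal,
        mul_assoc (permM σ), permM_mul_apply, Matrix.diagonal_mul]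
    -- the matrix M has constant first row and column
    have hMentry : ∀ i j, M i j = kronFourier Ms (finCongr hsize i) (finCongr hsize j) := by
      intro i j
      rw [hMdef, Matrix.reindex_apply, Matrix.submatrix_apply, finCongr_symm]
    have hMrow : ∀ j, M z j = kc Ls := by
      intro j
      rw [hMentry]
      have h0 : finCongr hsize z = (⟨0, hNM⟩ : Fin Ms.prod) := by
        apply Fin.ext
        simp [hz]
      rw [h0, kF_zero_left Ms hNM, kc_congr hsize.symm]
    have hMcol : ∀ i, M i z = kc Ls := by
      intro i
      rw [hMentry]
      have h0 : finCongr hsize z = (⟨0, hNM⟩ : Fin Ms.prod) := by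
        apply Fin.ext
        simp [hz]
      rw [h0, kF_zero_right Ms hNM, kc_congr hsize.symm]
    set g0 : Fin Ls.prod := σ.symm z with hg0
    set h0 : Fin Ls.prod := τ z with hh0
    have F2 : ∀ y, dr g0 * A g0 y * dc y = kc Ls := by
      intro y
      have := (entry z (τ.symm y)).symm
      rwa [hMrow, Equiv.apply_symm_apply] at this
    have F3 : ∀ x, dr x * A x h0 * dc h0 = kc Ls := by
      intro x
      have := (entry (σ x) z).symm
      rwa [hMcol, Equiv.symm_apply_apply] at this
    have F4 : dr g0 * A g0 h0 * dc h0 = kc Ls := F3 g0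
    set n0 : Fin Ls.prod := kNeg Ls g0 with hn0
    set m0 : Fin Ls.prod := kNeg Ls h0 with hm0
    refine ⟨permM (σ.symm.trans (addE Ls n0)).symm, permM (τ.trans (addE Ls m0)),
      isPermMatrix_permM _, isPermMatrix_permM _, ?_⟩
    ext i j
    rw [mul_permM_apply, permM_mul_apply, Equiv.symm_symm]
    show M i j = A ((σ.symm.trans (addE Ls n0)) i) ((τ.trans (addE Ls m0)) j)
    have hρ : (σ.symm.trans (addE Ls n0)) i = kAdd Ls (σ.symm i) n0 := rfl
    have hκ : (τ.trans (addE Ls m0)) j = kAdd Ls (τ j) m0 := rfl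
    rw [hρ, hκ]
    set x : Fin Ls.prod := σ.symm i with hx
    set y : Fin Ls.prod := τ j with hy
    have e1 : M i j * kc Ls = (dr x * dc y * (dr g0 * dc h0)) * (A x y * A g0 h0) := by
      rw [entry i j, ← F4]
      ring
    have e2 : kc Ls * kc Ls = (dr x * dc y * (dr g0 * dc h0)) * (A g0 y * A x h0) := by
      linear_combination (- (dr x * A x h0 * dc h0)) * F2 y - kc Ls * F3 x
    have hk := kF_key Ls x y g0 h0
    have e3 : M i j * (kc Ls * (A g0 y * A x h0))
        = A (kAdd Ls x n0) (kAdd Ls y m0) * (kc Ls * (A g0 y * A x h0)) := by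
      linear_combination (A g0 y * A x h0) * e1 - (A x y * A g0 h0) * e2 - kc Ls * hk
    exact mul_right_cancel₀
      (mul_ne_zero (kc_ne_zero Ls hN)
        (mul_ne_zero (kF_ne_zero Ls g0 y) (kF_ne_zero Ls x h0))) e3
end
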